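/- arXiv:2511.16305 — 4 statements merged into one kernel-verified Lean document; each statement's English description precedes it below -/
import Mathlib

section
/- Let u : ℝ² → ℝ⁴ be a C² immersion with orthonormal normal fields E¹, E² ∈ C¹(ℝ², ℝ⁴), i.e. (∇u)ᵀE¹ = (∇u)ᵀE² = 0, |E¹| = |E²| = 1, ⟨E¹,E²⟩ = 0. For a unit vector η ∈ ℝ², set t = ⟨x,η⟩, Γ(t) = sin t, Γ̄(t) = cos t. For λ > 0 and a ∈ C¹(ℝ², ℝ), define ũ(x) = u(x) + (Γ(λt)/λ) a(x) E¹(x) + (Γ̄(λt)/λ) a(x) E²(x). Then (∇ũ)ᵀ∇ũ − (∇u)ᵀ∇u = a² η⊗η + R, where every term of the remainder R carries at least one factor of 1/λ; explicitly, R equals the sum of the terms 2(Γ(λt)/λ) a sym((∇u)ᵀ∇E¹) + 2(Γ̄(λt)/λ) a sym((∇u)ᵀ∇E²) + (2/λ) a² sym((∇E²)ᵀE¹ ⊗ η) + (Γ(λt)²/λ²) a² (∇E¹)ᵀ∇E¹ + (Γ̄(λt)²/λ²) a² (∇E²)ᵀ∇E² + 2(Γ(λt)Γ̄(λt)/λ²)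 a² sym((∇E¹)ᵀ∇E²) + (1/λ²) ∇a⊗∇a. -/
/-- Partial derivative `∂ᵢ f` of a map `ℝ² → ℝ⁴`. -/
noncomputable def pd4 (f : (Fin 2 → ℝ) → (Fin 4 → ℝ)) (x : Fin 2 → ℝ) (i : Fin 2) :
    Fin 4 → ℝ :=
  fderiv ℝ f x (Pi.single i 1)

/-- Partial derivative `∂ᵢ a` of a scalar function on `ℝ²`. -/
noncomputable def pdS (a : (Fin 2 → ℝ) → ℝ) (x : Fin 2 → ℝ) (i : Fin 2) : ℝ :=
  fderiv ℝ a x (Pi.single i 1)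

/-- The 2×2 matrix field `(∇f)ᵀ∇g` with entries `⟨∂ᵢf, ∂ⱼg⟩`. -/
noncomputable def gramFG (f g : (Fin 2 → ℝ) → (Fin 4 → ℝ)) (x : Fin 2 → ℝ) :
    Fin 2 → Fin 2 → ℝ :=
  fun i j => ∑ k, pd4 f x i k * pd4 g x j k

/-- Symmetrization `sym M = (M + Mᵀ)/2` of a 2×2 matrix. -/
noncomputable def symM (M : Fin 2 → Fin 2 → ℝ) : Fin 2 → Fin 2 → ℝ :=
  fun i j => (M i j + M j i) / 2

/-- Outer product `v ⊗ w`. -/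
noncomputable def outerM (v w : Fin 2 → ℝ) : Fin 2 → Fin 2 → ℝ :=
  fun i j => v i * w j

/-- Nash's spiral perturbation:
`ũ = u + (Γ(λt)/λ) a E¹ + (Γ̄(λt)/λ) a E²` with `Γ = sin`, `Γ̄ = cos`, `t = ⟨x, η⟩`. -/
noncomputable def nashSpiral (u E1 E2 : (Fin 2 → ℝ) → (Fin 4 → ℝ))
    (a : (Fin 2 → ℝ) → ℝ) (η : Fin 2 → ℝ) (l : ℝ) :
    (Fin 2 → ℝ) → (Fin 4 → ℝ) :=
  fun x k => u x k + Real.sin (l * ∑ i, x i * η i) / l * a x * E1 x k +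
    Real.cos (l * ∑ i, x i * η i) / l * a x * E2 x k

noncomputable def tlin (η : Fin 2 → ℝ) : (Fin 2 → ℝ) →L[ℝ] ℝ :=
  ∑ j, η j • ContinuousLinearMap.proj j

lemma tlin_apply (η v : Fin 2 → ℝ) : tlin η v = ∑ j, η j * v j := by
  simp [tlin]

lemma tlin_single (η : Fin 2 → ℝ) (i : Fin 2) : tlin η (Pi.single i 1) = η i := by
  simp [tlin_apply, Pi.single_apply]

lemma hasFDerivAt_t (η : Fin 2 → ℝ) (x : Fin 2 → ℝ) :
    HasFDerivAt (fun y : Fin 2 → ℝ => ∑ i, y i * η i) (tlin η) x := by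
  have h : (fun y : Fin 2 → ℝ => ∑ i, y i * η i) = fun y => tlin η y := by
    funext y; rw [tlin_apply]; exact Finset.sum_congr rfl fun i _ => mul_comm _ _
  rw [h]; exact (tlin η).hasFDerivAt

lemma comp_proj_hasFDerivAt {f : (Fin 2 → ℝ) → (Fin 4 → ℝ)} {x : Fin 2 → ℝ}
    (hf : DifferentiableAt ℝ f x) (k : Fin 4) :
    HasFDerivAt (fun y => f y k) ((ContinuousLinearMap.proj k).comp (fderiv ℝ f x)) x := by
  have := (ContinuousLinearMap.proj (R := ℝ) (φ := fun _ : Fin 4 => ℝ) k).hasFDerivAt.comp x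
    hf.hasFDerivAt
  simpa [Function.comp_def] using this

lemma comp_proj_apply (f : (Fin 2 → ℝ) → (Fin 4 → ℝ)) (x : Fin 2 → ℝ) (i : Fin 2) (k : Fin 4) :
    ((ContinuousLinearMap.proj k).comp (fderiv ℝ f x)) (Pi.single i 1) = pd4 f x i k := rfl

lemma pd_nash (u E1 E2 : (Fin 2 → ℝ) → (Fin 4 → ℝ)) (a : (Fin 2 → ℝ) → ℝ)
    (η : Fin 2 → ℝ) (l : ℝ)
    (hu : Differentiable ℝ u) (hE1 : Differentiable ℝ E1) (hE2 : Differentiable ℝ E2)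
    (ha : Differentiable ℝ a) (hl : l ≠ 0) (x : Fin 2 → ℝ) (i : Fin 2) (k : Fin 4) :
    pd4 (nashSpiral u E1 E2 a η l) x i k =
      pd4 u x i k
      + (Real.cos (l * ∑ j, x j * η j) * η i * a x
         + Real.sin (l * ∑ j, x j * η j) / l * pdS a x i) * E1 x k
      + (-Real.sin (l * ∑ j, x j * η j) * η i * a x
         + Real.cos (l * ∑ j, x j * η j) / l * pdS a x i) * E2 x k
      + Real.sin (l * ∑ j, x j * η j) / l * a x * pd4 E1 x i k
      + Real.cos (l * ∑ j, x j * η j) / l * a x * pd4 E2 x i k := by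
  set T : ℝ := ∑ j, x j * η j with hT
  have hlt : HasFDerivAt (fun y : Fin 2 → ℝ => l * ∑ j, y j * η j) (l • tlin η) x :=
    (hasFDerivAt_t η x).const_mul l
  have hsin : HasFDerivAt (fun y : Fin 2 → ℝ => Real.sin (l * ∑ j, y j * η j))
      (Real.cos (l * T) • (l • tlin η)) x :=
    by have := (Real.hasDerivAt_sin (l * T)).comp_hasFDerivAt x hlt; exact this
  have hcos : HasFDerivAt (fun y : Fin 2 → ℝ => Real.cos (l * ∑ j, y j * η j))
      ((-Real.sin (l * T)) • (l • tlin η)) x :=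
    by have := (Real.hasDerivAt_cos (l * T)).comp_hasFDerivAt x hlt; exact this
  have hA : HasFDerivAt a (fderiv ℝ a x) x := (ha x).hasFDerivAt
  have hD : ∀ k : Fin 4, HasFDerivAt (fun y => nashSpiral u E1 E2 a η l y k)
      (((ContinuousLinearMap.proj k).comp (fderiv ℝ u x)
        + ((Real.sin (l * T) * l⁻¹ * a x) • ((ContinuousLinearMap.proj k).comp (fderiv ℝ E1 x))
          + E1 x k • ((Real.sin (l * T) * l⁻¹) • fderiv ℝ a x
            + a x • (l⁻¹ • (Real.cos (l * T) • (l • tlin η))))))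
        + ((Real.cos (l * T) * l⁻¹ * a x) • ((ContinuousLinearMap.proj k).comp (fderiv ℝ E2 x))
          + E2 x k • ((Real.cos (l * T) * l⁻¹) • fderiv ℝ a x
            + a x • (l⁻¹ • ((-Real.sin (l * T)) • (l • tlin η)))))) x := by
    intro k
    have h1 : HasFDerivAt (fun y : Fin 2 → ℝ => Real.sin (l * ∑ j, y j * η j) * l⁻¹)
        (l⁻¹ • (Real.cos (l * T) • (l • tlin η))) x := hsin.mul_const l⁻¹
    have h2 : HasFDerivAt (fun y : Fin 2 → ℝ => Real.cos (l * ∑ j, y j * η j) * l⁻¹)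
        (l⁻¹ • ((-Real.sin (l * T)) • (l • tlin η))) x := hcos.mul_const l⁻¹
    have hterm1 := ((h1.mul hA).mul (comp_proj_hasFDerivAt (hE1 x) k))
    have hterm2 := ((h2.mul hA).mul (comp_proj_hasFDerivAt (hE2 x) k))
    have := ((comp_proj_hasFDerivAt (hu x) k).add hterm1).add hterm2
    simp only [nashSpiral, div_eq_mul_inv]
    exact this
  have hPi : HasFDerivAt (nashSpiral u E1 E2 a η l)
      (ContinuousLinearMap.pi fun k =>
        (((ContinuousLinearMap.proj k).comp (fderiv ℝ u x)
        + ((Real.sin (l * T) * l⁻¹ * a x) • ((ContinuousLinearMap.proj k).comp (fderiv ℝ E1 x))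
          + E1 x k • ((Real.sin (l * T) * l⁻¹) • fderiv ℝ a x
            + a x • (l⁻¹ • (Real.cos (l * T) • (l • tlin η))))))
        + ((Real.cos (l * T) * l⁻¹ * a x) • ((ContinuousLinearMap.proj k).comp (fderiv ℝ E2 x))
          + E2 x k • ((Real.cos (l * T) * l⁻¹) • fderiv ℝ a x
            + a x • (l⁻¹ • ((-Real.sin (l * T)) • (l • tlin η))))))) x :=
    hasFDerivAt_pi.2 hD
  have hval : pd4 (nashSpiral u E1 E2 a η l) x i k
      = (ContinuousLinearMap.pi fun k =>
        (((ContinuousLinearMap.proj k).comp (fderiv ℝ u x)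
        + ((Real.sin (l * T) * l⁻¹ * a x) • ((ContinuousLinearMap.proj k).comp (fderiv ℝ E1 x))
          + E1 x k • ((Real.sin (l * T) * l⁻¹) • fderiv ℝ a x
            + a x • (l⁻¹ • (Real.cos (l * T) • (l • tlin η))))))
        + ((Real.cos (l * T) * l⁻¹ * a x) • ((ContinuousLinearMap.proj k).comp (fderiv ℝ E2 x))
          + E2 x k • ((Real.cos (l * T) * l⁻¹) • fderiv ℝ a x
            + a x • (l⁻¹ • ((-Real.sin (l * T)) • (l • tlin η))))))) (Pi.single i 1) k := by
    rw [pd4, hPi.fderiv]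
  rw [hval]
  simp only [ContinuousLinearMap.pi_apply, ContinuousLinearMap.add_apply,
    ContinuousLinearMap.smul_apply, comp_proj_apply, tlin_single, smul_eq_mul]
  show pd4 u x i k + _ + _ = _
  rw [← pdS]
  field_simp
  ring

lemma inner_const_deriv {f g : (Fin 2 → ℝ) → (Fin 4 → ℝ)} (hf : Differentiable ℝ f)
    (hg : Differentiable ℝ g) {c : ℝ} (h : ∀ x, ∑ k, f x k * g x k = c)
    (x : Fin 2 → ℝ) (i : Fin 2) :
    (∑ k, pd4 f x i k * g x k) + ∑ k, f x k * pd4 g x i k = 0 := by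
  have hD : HasFDerivAt (fun y => ∑ k, f y k * g y k)
      (∑ k : Fin 4, (f x k • (ContinuousLinearMap.proj k).comp (fderiv ℝ g x)
        + g x k • (ContinuousLinearMap.proj k).comp (fderiv ℝ f x))) x :=
    HasFDerivAt.fun_sum fun k _ =>
      (comp_proj_hasFDerivAt (hf x) k).mul (comp_proj_hasFDerivAt (hg x) k)
  have hfun : (fun y => ∑ k, f y k * g y k) = fun _ => c := funext h
  rw [hfun] at hD
  have h0 := hD.unique (hasFDerivAt_const c x)
  have h1 : (∑ k : Fin 4, (f x k • (ContinuousLinearMap.proj k).comp (fderiv ℝ g x)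
        + g x k • (ContinuousLinearMap.proj k).comp (fderiv ℝ f x))) (Pi.single i 1) = 0 := by
    rw [h0]; rfl
  simp only [ContinuousLinearMap.sum_apply, ContinuousLinearMap.add_apply,
    ContinuousLinearMap.smul_apply, comp_proj_apply, smul_eq_mul,
    Finset.sum_add_distrib] at h1
  have e1 : (∑ k : Fin 4, pd4 f x i k * g x k) = ∑ k : Fin 4, g x k * pd4 f x i k :=
    Finset.sum_congr rfl fun k _ => mul_comm _ _
  rw [e1]; linarith

theorem stmt4 (u E1 E2 : (Fin 2 → ℝ) → (Fin 4 → ℝ)) (a : (Fin 2 → ℝ) → ℝ)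
    (η : Fin 2 → ℝ) (l : ℝ)
    (hu : ContDiff ℝ 2 u) (hE1 : ContDiff ℝ 1 E1) (hE2 : ContDiff ℝ 1 E2)
    (ha : ContDiff ℝ 1 a)
    (himm : ∀ x, Function.Injective (fderiv ℝ u x))
    (hE1n : ∀ x, ∀ i, ∑ k, pd4 u x i k * E1 x k = 0)
    (hE2n : ∀ x, ∀ i, ∑ k, pd4 u x i k * E2 x k = 0)
    (hE1u : ∀ x, ∑ k, (E1 x k) ^ 2 = 1) (hE2u : ∀ x, ∑ k, (E2 x k) ^ 2 = 1)
    (hE12 : ∀ x, ∑ k, E1 x k * E2 x k = 0)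
    (hη : ∑ i, (η i) ^ 2 = 1) (hl : 0 < l) :
    ∀ x : Fin 2 → ℝ,
      gramFG (nashSpiral u E1 E2 a η l) (nashSpiral u E1 E2 a η l) x - gramFG u u x
      = (a x) ^ 2 • outerM η η
        -- the remainder R, each of whose terms carries at least one factor 1/λ:
        + (2 * Real.sin (l * ∑ i, x i * η i) / l * a x) • symM (gramFG u E1 x)
        + (2 * Real.cos (l * ∑ i, x i * η i) / l * a x) • symM (gramFG u E2 x)
        + (2 / l * (a x) ^ 2) •
            symM (outerM (fun i => ∑ k, pd4 E2 x i k * E1 x k) η)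
        + ((Real.sin (l * ∑ i, x i * η i)) ^ 2 / l ^ 2 * (a x) ^ 2) • gramFG E1 E1 x
        + ((Real.cos (l * ∑ i, x i * η i)) ^ 2 / l ^ 2 * (a x) ^ 2) • gramFG E2 E2 x
        + (2 * Real.sin (l * ∑ i, x i * η i) * Real.cos (l * ∑ i, x i * η i) / l ^ 2 *
            (a x) ^ 2) • symM (gramFG E1 E2 x)
        + (1 / l ^ 2) • outerM (pdS a x) (pdS a x) := by
  intro x
  have hud : Differentiable ℝ u := hu.differentiable two_ne_zero
  have hE1d : Differentiable ℝ E1 := hE1.differentiable one_ne_zero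
  have hE2d : Differentiable ℝ E2 := hE2.differentiable one_ne_zero
  have had : Differentiable ℝ a := ha.differentiable one_ne_zero
  have hl' : l ≠ 0 := hl.ne'
  have hpd : ∀ (i : Fin 2) (k : Fin 4), pd4 (nashSpiral u E1 E2 a η l) x i k =
      pd4 u x i k
      + (Real.cos (l * ∑ j, x j * η j) * η i * a x
         + Real.sin (l * ∑ j, x j * η j) / l * pdS a x i) * E1 x k
      + (-Real.sin (l * ∑ j, x j * η j) * η i * a x
         + Real.cos (l * ∑ j, x j * η j) / l * pdS a x i) * E2 x k
      + Real.sin (l * ∑ j, x j * η j) / l * a x * pd4 E1 x i k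
      + Real.cos (l * ∑ j, x j * η j) / l * a x * pd4 E2 x i k :=
    fun i k => pd_nash u E1 E2 a η l hud hE1d hE2d had hl' x i k
  have e11 : (∑ k : Fin 4, E1 x k * E1 x k) = 1 := by
    have := hE1u x; simpa [pow_two] using this
  have e22 : (∑ k : Fin 4, E2 x k * E2 x k) = 1 := by
    have := hE2u x; simpa [pow_two] using this
  have e12 : (∑ k : Fin 4, E1 x k * E2 x k) = 0 := hE12 x
  have o11 : ∀ i : Fin 2, (∑ k : Fin 4, pd4 E1 x i k * E1 x k) = 0 := by
    intro i
    have h := inner_const_deriv hE1d hE1d (fun y => by simpa [pow_two] using hE1u y) x i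
    have h2 : (∑ k : Fin 4, E1 x k * pd4 E1 x i k) = ∑ k : Fin 4, pd4 E1 x i k * E1 x k :=
      Finset.sum_congr rfl fun _ _ => mul_comm _ _
    linarith [h, h2.symm.le]
  have o22 : ∀ i : Fin 2, (∑ k : Fin 4, pd4 E2 x i k * E2 x k) = 0 := by
    intro i
    have h := inner_const_deriv hE2d hE2d (fun y => by simpa [pow_two] using hE2u y) x i
    have h2 : (∑ k : Fin 4, E2 x k * pd4 E2 x i k) = ∑ k : Fin 4, pd4 E2 x i k * E2 x k :=
      Finset.sum_congr rfl fun _ _ => mul_comm _ _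
    linarith [h, h2.symm.le]
  have o12 : ∀ i : Fin 2, (∑ k : Fin 4, pd4 E1 x i k * E2 x k)
      = -∑ k : Fin 4, pd4 E2 x i k * E1 x k := by
    intro i
    have h := inner_const_deriv hE1d hE2d hE12 x i
    have h2 : (∑ k : Fin 4, E1 x k * pd4 E2 x i k) = ∑ k : Fin 4, pd4 E2 x i k * E1 x k :=
      Finset.sum_congr rfl fun _ _ => mul_comm _ _
    linarith [h, h2.le, h2.ge]
  funext i j
  simp only [Pi.sub_apply, Pi.add_apply, Pi.smul_apply, smul_eq_mul, gramFG, symM, outerM]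
  have expand : (∑ k : Fin 4, pd4 (nashSpiral u E1 E2 a η l) x i k *
        pd4 (nashSpiral u E1 E2 a η l) x j k)
      = (∑ k : Fin 4, pd4 u x i k * pd4 u x j k)
        + (Real.cos (l * ∑ i, x i * η i) * η j * a x + Real.sin (l * ∑ i, x i * η i) / l * pdS a x j) * (∑ k : Fin 4, pd4 u x i k * E1 x k)
        + (-Real.sin (l * ∑ i, x i * η i) * η j * a x + Real.cos (l * ∑ i, x i * η i) / l * pdS a x j) * (∑ k : Fin 4, pd4 u x i k * E2 x k)
        + (Real.sin (l * ∑ i, x i * η i) / l * a x) * (∑ k : Fin 4, pd4 u x i k * pd4 E1 x j k)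
        + (Real.cos (l * ∑ i, x i * η i) / l * a x) * (∑ k : Fin 4, pd4 u x i k * pd4 E2 x j k)
        + (Real.cos (l * ∑ i, x i * η i) * η i * a x + Real.sin (l * ∑ i, x i * η i) / l * pdS a x i) * (∑ k : Fin 4, pd4 u x j k * E1 x k)
        + (Real.cos (l * ∑ i, x i * η i) * η i * a x + Real.sin (l * ∑ i, x i * η i) / l * pdS a x i) * (Real.cos (l * ∑ i, x i * η i) * η j * a x + Real.sin (l * ∑ i, x i * η i) / l * pdS a x j) * (∑ k : Fin 4, E1 x k * E1 x k)
        + (Real.cos (l * ∑ i, x i * η i) * η i * a x + Real.sin (l * ∑ i, x i * η i) / l * pdS a x i) * (-Real.sin (l * ∑ i, x i * η i) * η j * a x + Real.cos (l * ∑ i, x i * η i) / l * pdS a x j) * (∑ k : Fin 4, E1 x k * E2 x k)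
        + (Real.cos (l * ∑ i, x i * η i) * η i * a x + Real.sin (l * ∑ i, x i * η i) / l * pdS a x i) * (Real.sin (l * ∑ i, x i * η i) / l * a x) * (∑ k : Fin 4, pd4 E1 x j k * E1 x k)
        + (Real.cos (l * ∑ i, x i * η i) * η i * a x + Real.sin (l * ∑ i, x i * η i) / l * pdS a x i) * (Real.cos (l * ∑ i, x i * η i) / l * a x) * (∑ k : Fin 4, pd4 E2 x j k * E1 x k)
        + (-Real.sin (l * ∑ i, x i * η i) * η i * a x + Real.cos (l * ∑ i, x i * η i) / l * pdS a x i) * (∑ k : Fin 4, pd4 u x j k * E2 x k)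
        + (-Real.sin (l * ∑ i, x i * η i) * η i * a x + Real.cos (l * ∑ i, x i * η i) / l * pdS a x i) * (Real.cos (l * ∑ i, x i * η i) * η j * a x + Real.sin (l * ∑ i, x i * η i) / l * pdS a x j) * (∑ k : Fin 4, E1 x k * E2 x k)
        + (-Real.sin (l * ∑ i, x i * η i) * η i * a x + Real.cos (l * ∑ i, x i * η i) / l * pdS a x i) * (-Real.sin (l * ∑ i, x i * η i) * η j * a x + Real.cos (l * ∑ i, x i * η i) / l * pdS a x j) * (∑ k : Fin 4, E2 x k * E2 x k)
        + (-Real.sin (l * ∑ i, x i * η i) * η i * a x + Real.cos (l * ∑ i, x i * η i) / l * pdS a x i) * (Real.sin (l * ∑ i, x i * η i) / l * a x) * (∑ k : Fin 4, pd4 E1 x j k * E2 x k)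
        + (-Real.sin (l * ∑ i, x i * η i) * η i * a x + Real.cos (l * ∑ i, x i * η i) / l * pdS a x i) * (Real.cos (l * ∑ i, x i * η i) / l * a x) * (∑ k : Fin 4, pd4 E2 x j k * E2 x k)
        + (Real.sin (l * ∑ i, x i * η i) / l * a x) * (∑ k : Fin 4, pd4 u x j k * pd4 E1 x i k)
        + (Real.sin (l * ∑ i, x i * η i) / l * a x) * (Real.cos (l * ∑ i, x i * η i) * η j * a x + Real.sin (l * ∑ i, x i * η i) / l * pdS a x j) * (∑ k : Fin 4, pd4 E1 x i k * E1 x k)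
        + (Real.sin (l * ∑ i, x i * η i) / l * a x) * (-Real.sin (l * ∑ i, x i * η i) * η j * a x + Real.cos (l * ∑ i, x i * η i) / l * pdS a x j) * (∑ k : Fin 4, pd4 E1 x i k * E2 x k)
        + (Real.sin (l * ∑ i, x i * η i) / l * a x) * (Real.sin (l * ∑ i, x i * η i) / l * a x) * (∑ k : Fin 4, pd4 E1 x i k * pd4 E1 x j k)
        + (Real.sin (l * ∑ i, x i * η i) / l * a x) * (Real.cos (l * ∑ i, x i * η i) / l * a x) * (∑ k : Fin 4, pd4 E1 x i k * pd4 E2 x j k)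
        + (Real.cos (l * ∑ i, x i * η i) / l * a x) * (∑ k : Fin 4, pd4 u x j k * pd4 E2 x i k)
        + (Real.cos (l * ∑ i, x i * η i) / l * a x) * (Real.cos (l * ∑ i, x i * η i) * η j * a x + Real.sin (l * ∑ i, x i * η i) / l * pdS a x j) * (∑ k : Fin 4, pd4 E2 x i k * E1 x k)
        + (Real.cos (l * ∑ i, x i * η i) / l * a x) * (-Real.sin (l * ∑ i, x i * η i) * η j * a x + Real.cos (l * ∑ i, x i * η i) / l * pdS a x j) * (∑ k : Fin 4, pd4 E2 x i k * E2 x k)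
        + (Real.cos (l * ∑ i, x i * η i) / l * a x) * (Real.sin (l * ∑ i, x i * η i) / l * a x) * (∑ k : Fin 4, pd4 E1 x j k * pd4 E2 x i k)
        + (Real.cos (l * ∑ i, x i * η i) / l * a x) * (Real.cos (l * ∑ i, x i * η i) / l * a x) * (∑ k : Fin 4, pd4 E2 x i k * pd4 E2 x j k) := by
    simp only [hpd]
    simp only [Finset.mul_sum, ← Finset.sum_add_distrib]
    exact Finset.sum_congr rfl fun k _ => by ring
  rw [expand, hE1n x i, hE1n x j, hE2n x i, hE2n x j, e11, e12, e22,
    o11 i, o11 j, o22 i, o22 j, o12 i, o12 j]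
  linear_combination ((a x) ^ 2 * η i * η j
    + pdS a x i * pdS a x j / l ^ 2
    + (a x) ^ 2 / l * (η i * (∑ k : Fin 4, pd4 E2 x j k * E1 x k) + η j * (∑ k : Fin 4, pd4 E2 x i k * E1 x k)))
    * Real.sin_sq_add_cos_sq (l * ∑ i, x i * η i)
end

section
/- Let u : ℝ² → ℝ⁴ be a C² immersion with unit normal field E ∈ C¹(ℝ², ℝ⁴) satisfying (∇u)ᵀE = 0 and |E| = 1. Set Tᵤ = (∇u)((∇u)ᵀ∇u)⁻¹. For a unit vector η ∈ ℝ², t = ⟨x,η⟩, Γ(t) = √2 sin t, Γ̄(t) = −(1/4) sin(2t), λ > 0, a ∈ C¹(ℝ²,ℝ), w ∈ C¹(ℝ²,ℝ²), define ũ = u + (Γ(λt)/λ) a E + Tᵤ((Γ̄(λt)/λ) a² η + w). Then (∇ũ)ᵀ∇ũ − (∇u)ᵀ∇u = a² η⊗η + (1/λ²)∇a⊗∇a + ((Γ(λt)²−1)/λ²) S₁ + (Γ(λt)Γ′(λt)/λ) S₂ + (Γ(λt)/λ) S₃ + (Γ̄(λt)/λ) S₄ + 2 sym∇w + R₁ +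 R₂, where S₁ = ∇a⊗∇a, S₂ = 2a sym(∇a⊗η), S₃ = 2a sym((∇u)ᵀ∇E), S₄ = 2 sym((∇u)ᵀ∇(a² Tᵤη)), and R₁, R₂ are explicit residual terms each of whose summands carries at least one factor of 1/λ or is quadratic in the perturbation. -/
/-- Symmetric gradient `sym ∇w` of a vector field `w : ℝ² → ℝ²`. -/
noncomputable def symGradV (w : (Fin 2 → ℝ) → (Fin 2 → ℝ)) (x : Fin 2 → ℝ) :
    Fin 2 → Fin 2 → ℝ :=
  fun i j => (pdS (fun y => w y j) x i + pdS (fun y => w y i) x j) / 2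

/-- The Jacobian `∇u` as a 4×2 matrix. -/
noncomputable def Dmat (u : (Fin 2 → ℝ) → (Fin 4 → ℝ)) (x : Fin 2 → ℝ) :
    Matrix (Fin 4) (Fin 2) ℝ :=
  fun k i => pd4 u x i k

/-- The induced metric `(∇u)ᵀ∇u` as a `Matrix`. -/
noncomputable def gramMat (u : (Fin 2 → ℝ) → (Fin 4 → ℝ)) (x : Fin 2 → ℝ) :
    Matrix (Fin 2) (Fin 2) ℝ :=
  fun i j => ∑ k, Dmat u x k i * Dmat u x k j

/-- The tangent frame `Tᵤ = (∇u)((∇u)ᵀ∇u)⁻¹`. -/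
noncomputable def Tmat (u : (Fin 2 → ℝ) → (Fin 4 → ℝ)) (x : Fin 2 → ℝ) :
    Matrix (Fin 4) (Fin 2) ℝ :=
  Dmat u x * (gramMat u x)⁻¹

/-- The field `a² Tᵤ η : ℝ² → ℝ⁴`. -/
noncomputable def vfield (u : (Fin 2 → ℝ) → (Fin 4 → ℝ)) (a : (Fin 2 → ℝ) → ℝ)
    (η : Fin 2 → ℝ) : (Fin 2 → ℝ) → (Fin 4 → ℝ) :=
  fun y k => (a y) ^ 2 * ∑ i, Tmat u y k i * η i

/-- The field `Tᵤ w : ℝ² → ℝ⁴`. -/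
noncomputable def twfield (u : (Fin 2 → ℝ) → (Fin 4 → ℝ))
    (w : (Fin 2 → ℝ) → (Fin 2 → ℝ)) : (Fin 2 → ℝ) → (Fin 4 → ℝ) :=
  fun y k => ∑ i, Tmat u y k i * w y i

/-- The field `a E : ℝ² → ℝ⁴`. -/
noncomputable def aEfield (a : (Fin 2 → ℝ) → ℝ) (E : (Fin 2 → ℝ) → (Fin 4 → ℝ)) :
    (Fin 2 → ℝ) → (Fin 4 → ℝ) :=
  fun y k => a y * E y k

/-- Kuiper's corrugation:
`ũ = u + (Γ(λt)/λ) a E + Tᵤ((Γ̄(λt)/λ) a² η + w)` with `Γ(t) = √2 sin t`,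
`Γ̄(t) = −(1/4) sin 2t`, `t = ⟨x, η⟩`. -/
noncomputable def kuiper (u E : (Fin 2 → ℝ) → (Fin 4 → ℝ)) (a : (Fin 2 → ℝ) → ℝ)
    (η : Fin 2 → ℝ) (w : (Fin 2 → ℝ) → (Fin 2 → ℝ)) (l : ℝ) :
    (Fin 2 → ℝ) → (Fin 4 → ℝ) :=
  fun x k => u x k +
    (Real.sqrt 2 * Real.sin (l * ∑ i, x i * η i)) / l * a x * E x k +
    (-(1 / 4) * Real.sin (2 * (l * ∑ i, x i * η i))) / l *
      ((a x) ^ 2 * ∑ i, Tmat u x k i * η i) +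
    ∑ i, Tmat u x k i * w x i

-- differentiability of y ↦ pd4 f y j k for C² f
noncomputable def pdv (f : (Fin 2 → ℝ) → ℝ) (x v : Fin 2 → ℝ) : ℝ := fderiv ℝ f x v

variable {f g : (Fin 2 → ℝ) → ℝ} {x v : Fin 2 → ℝ}

lemma pdv_add (hf : DifferentiableAt ℝ f x) (hg : DifferentiableAt ℝ g x) :
    pdv (fun y => f y + g y) x v = pdv f x v + pdv g x v := by
  rw [pdv, fderiv_fun_add hf hg]; rfl

lemma pdv_mul (hf : DifferentiableAt ℝ f x) (hg : DifferentiableAt ℝ g x) :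
    pdv (fun y => f y * g y) x v = f x * pdv g x v + g x * pdv f x v := by
  rw [pdv, fderiv_fun_mul hf hg]; rfl

lemma pdv_const_mul (hf : DifferentiableAt ℝ f x) (c : ℝ) :
    pdv (fun y => c * f y) x v = c * pdv f x v := by
  rw [pdv, fderiv_const_mul hf c]; rfl

lemma pdv_div_const (hf : DifferentiableAt ℝ f x) (c : ℝ) :
    pdv (fun y => f y / c) x v = pdv f x v / c := by
  have h : (fun y => f y / c) = fun y => f y * c⁻¹ := funext fun y => div_eq_mul_inv _ _
  rw [pdv, h, fderiv_mul_const hf]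
  simp [pdv, div_eq_mul_inv, mul_comm]

lemma pdv_sin (hf : DifferentiableAt ℝ f x) :
    pdv (fun y => Real.sin (f y)) x v = Real.cos (f x) * pdv f x v := by
  have h := ((Real.hasDerivAt_sin (f x)).comp_hasFDerivAt x hf.hasFDerivAt).fderiv
  rw [pdv, show (fun y => Real.sin (f y)) = Real.sin ∘ f from rfl, h]; rfl

lemma pdv_sum {n : ℕ} {F : Fin n → (Fin 2 → ℝ) → ℝ}
    (hF : ∀ i, DifferentiableAt ℝ (F i) x) :
    pdv (fun y => ∑ i, F i y) x v = ∑ i, pdv (F i) x v := by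
  rw [pdv, fderiv_fun_sum (fun i _ => hF i)]
  simp [pdv]

lemma pdv_tau (η : Fin 2 → ℝ) :
    pdv (fun y => ∑ i, y i * η i) x v = ∑ i, v i * η i := by
  set P : Fin 2 → ((Fin 2 → ℝ) →L[ℝ] ℝ) := fun i => ContinuousLinearMap.proj i with hP
  have h0 : ∀ i : Fin 2, HasFDerivAt (fun y : Fin 2 → ℝ => y i) (P i) x := fun i =>
    (P i).hasFDerivAt
  have h : ∀ i : Fin 2, HasFDerivAt (fun y : Fin 2 → ℝ => y i * η i) (η i • P i) x :=
    fun i => (h0 i).mul_const (η i)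
  rw [pdv, (HasFDerivAt.fun_sum (fun i (_ : i ∈ Finset.univ) => h i)).fderiv]
  simp [hP, mul_comm, ContinuousLinearMap.proj]

lemma pdv_tau' (η : Fin 2 → ℝ) (j : Fin 2) :
    pdv (fun y => ∑ i, y i * η i) x (Pi.single j 1) = η j := by
  rw [pdv_tau]
  simp [Pi.single_apply, ite_mul]

lemma pd4_diff {f : (Fin 2 → ℝ) → (Fin 4 → ℝ)} (hf : ContDiff ℝ 2 f) (j : Fin 2) (k : Fin 4) :
    Differentiable ℝ fun y => pd4 f y j k := by
  have h1 : ContDiff ℝ 1 (fderiv ℝ f) := hf.fderiv_right (by norm_num)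
  have h2 : Differentiable ℝ (fun y => fderiv ℝ f y (Pi.single j 1)) :=
    (h1.differentiable one_ne_zero).clm_apply (differentiable_const _)
  exact differentiable_pi.mp h2 k


lemma gram_diff {u} (hu : ContDiff ℝ 2 u) (i j : Fin 2) :
    Differentiable ℝ fun y => gramMat u y i j := by
  simp only [gramMat, Dmat]
  exact Differentiable.fun_sum fun k _ => (pd4_diff hu i k).mul (pd4_diff hu j k)

lemma det_diff {u} (hu : ContDiff ℝ 2 u) :
    Differentiable ℝ fun y => (gramMat u y).det := by
  have : (fun y => (gramMat u y).det)
      = fun y => gramMat u y 0 0 * gramMat u y 1 1 - gramMat u y 0 1 * gramMat u y 1 0 :=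
    funext fun y => Matrix.det_fin_two _
  rw [this]
  exact ((gram_diff hu 0 0).mul (gram_diff hu 1 1)).sub ((gram_diff hu 0 1).mul (gram_diff hu 1 0))

lemma adj_diff {u} (hu : ContDiff ℝ 2 u) (i j : Fin 2) :
    Differentiable ℝ fun y => (gramMat u y).adjugate i j := by
  have e00 : ∀ y, (gramMat u y).adjugate 0 0 = gramMat u y 1 1 := by
    intro y; rw [Matrix.adjugate_fin_two]; rfl
  have e01 : ∀ y, (gramMat u y).adjugate 0 1 = -gramMat u y 0 1 := by
    intro y; rw [Matrix.adjugate_fin_two]; rfl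
  have e10 : ∀ y, (gramMat u y).adjugate 1 0 = -gramMat u y 1 0 := by
    intro y; rw [Matrix.adjugate_fin_two]; rfl
  have e11 : ∀ y, (gramMat u y).adjugate 1 1 = gramMat u y 0 0 := by
    intro y; rw [Matrix.adjugate_fin_two]; rfl
  fin_cases i <;> fin_cases j
  · show Differentiable ℝ fun y => (gramMat u y).adjugate 0 0
    simpa only [e00] using gram_diff hu 1 1
  · show Differentiable ℝ fun y => (gramMat u y).adjugate 0 1
    simpa only [e01] using (gram_diff hu 0 1).fun_neg
  · show Differentiable ℝ fun y => (gramMat u y).adjugate 1 0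
    simpa only [e10] using (gram_diff hu 1 0).fun_neg
  · show Differentiable ℝ fun y => (gramMat u y).adjugate 1 1
    simpa only [e11] using gram_diff hu 0 0

lemma inv_diff {u} (hu : ContDiff ℝ 2 u) (hdet : ∀ x, (gramMat u x).det ≠ 0) (i j : Fin 2) :
    Differentiable ℝ fun y => (gramMat u y)⁻¹ i j := by
  have h : ∀ y, (gramMat u y)⁻¹ i j = ((gramMat u y).det)⁻¹ * (gramMat u y).adjugate i j := by
    intro y
    rw [Matrix.inv_def, Matrix.smul_apply, Ring.inverse_eq_inv', smul_eq_mul]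
  simp only [h]
  exact ((det_diff hu).inv hdet).mul (adj_diff hu i j)

lemma Tmat_diff {u} (hu : ContDiff ℝ 2 u) (hdet : ∀ x, (gramMat u x).det ≠ 0)
    (k : Fin 4) (i : Fin 2) : Differentiable ℝ fun y => Tmat u y k i := by
  have h : ∀ y, Tmat u y k i = ∑ j, pd4 u y j k * (gramMat u y)⁻¹ j i := by
    intro y; rw [Tmat, Matrix.mul_apply]; rfl
  simp only [h]
  exact Differentiable.fun_sum fun j _ => (pd4_diff hu j k).mul (inv_diff hu hdet j i)

lemma DT_eq {u : (Fin 2 → ℝ) → (Fin 4 → ℝ)} (hdet : ∀ x, (gramMat u x).det ≠ 0)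
    (x : Fin 2 → ℝ) (i i' : Fin 2) :
    ∑ k, pd4 u x i k * Tmat u x k i' = if i = i' then 1 else 0 := by
  calc ∑ k, pd4 u x i k * Tmat u x k i'
      = ∑ k, ∑ j, Dmat u x k i * Dmat u x k j * (gramMat u x)⁻¹ j i' := by
        refine Finset.sum_congr rfl fun k _ => ?_
        simp only [Tmat, Matrix.mul_apply, Finset.mul_sum, Dmat]
        exact Finset.sum_congr rfl fun j _ => by ring
    _ = ∑ j, (∑ k, Dmat u x k i * Dmat u x k j) * (gramMat u x)⁻¹ j i' := by
        rw [Finset.sum_comm]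
        exact Finset.sum_congr rfl fun j _ => (Finset.sum_mul _ _ _).symm
    _ = (gramMat u x * (gramMat u x)⁻¹) i i' := by rw [Matrix.mul_apply]; rfl
    _ = (1 : Matrix (Fin 2) (Fin 2) ℝ) i i' := by
        rw [Matrix.mul_nonsing_inv _ (isUnit_iff_ne_zero.mpr (hdet x))]
    _ = if i = i' then 1 else 0 := Matrix.one_apply

lemma ET_eq {u E : (Fin 2 → ℝ) → (Fin 4 → ℝ)}
    (hEn : ∀ x, ∀ i, ∑ k, pd4 u x i k * E x k = 0) (x : Fin 2 → ℝ) (i' : Fin 2) :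
    ∑ k, E x k * Tmat u x k i' = 0 := by
  calc ∑ k, E x k * Tmat u x k i'
      = ∑ k, ∑ j, E x k * Dmat u x k j * (gramMat u x)⁻¹ j i' := by
        refine Finset.sum_congr rfl fun k _ => ?_
        simp only [Tmat, Matrix.mul_apply, Finset.mul_sum, Dmat]
        exact Finset.sum_congr rfl fun j _ => by ring
    _ = ∑ j, (∑ k, E x k * Dmat u x k j) * (gramMat u x)⁻¹ j i' := by
        rw [Finset.sum_comm]
        exact Finset.sum_congr rfl fun j _ => (Finset.sum_mul _ _ _).symm
    _ = 0 := by
        refine Finset.sum_eq_zero fun j _ => ?_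
        have : ∑ k, E x k * Dmat u x k j = 0 := by
          rw [← hEn x j]
          exact Finset.sum_congr rfl fun k _ => by rw [Dmat]; ring
        rw [this, zero_mul]

lemma pd4_eq_comp {f : (Fin 2 → ℝ) → (Fin 4 → ℝ)} {x : Fin 2 → ℝ}
    (hf : ∀ k, DifferentiableAt ℝ (fun y => f y k) x) (j : Fin 2) (k : Fin 4) :
    pd4 f x j k = fderiv ℝ (fun y => f y k) x (Pi.single j 1) := by
  have : fderiv ℝ f x = ContinuousLinearMap.pi fun k => fderiv ℝ (fun y => f y k) x :=
    fderiv_pi hf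
  simp [pd4, this]

section main
variable {u E : (Fin 2 → ℝ) → (Fin 4 → ℝ)} {a : (Fin 2 → ℝ) → ℝ} {η : Fin 2 → ℝ}
  {w : (Fin 2 → ℝ) → (Fin 2 → ℝ)} {l : ℝ}

lemma diff_a (ha : ContDiff ℝ 1 a) : Differentiable ℝ a := ha.differentiable one_ne_zero

lemma diff_Ek (hE : ContDiff ℝ 1 E) (k : Fin 4) : Differentiable ℝ fun y => E y k :=
  differentiable_pi.mp (hE.differentiable one_ne_zero) k

lemma diff_wi (hw : ContDiff ℝ 1 w) (i : Fin 2) : Differentiable ℝ fun y => w y i :=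
  differentiable_pi.mp (hw.differentiable one_ne_zero) i

lemma diff_uk (hu : ContDiff ℝ 2 u) (k : Fin 4) : Differentiable ℝ fun y => u y k :=
  differentiable_pi.mp (hu.differentiable (by norm_num)) k

lemma aE_expand (ha : ContDiff ℝ 1 a) (hE : ContDiff ℝ 1 E) (x : Fin 2 → ℝ) (j : Fin 2)
    (k : Fin 4) : pd4 (aEfield a E) x j k = pdS a x j * E x k + a x * pd4 E x j k := by
  have hak : DifferentiableAt ℝ a x := diff_a ha x
  have hEk : ∀ k, DifferentiableAt ℝ (fun y => E y k) x := fun k => diff_Ek hE k x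
  have h1 : pd4 (aEfield a E) x j k = pdv (fun y => a y * E y k) x (Pi.single j 1) :=
    pd4_eq_comp (fun k => hak.mul (hEk k)) j k
  have h2 : pd4 E x j k = pdv (fun y => E y k) x (Pi.single j 1) := pd4_eq_comp hEk j k
  rw [h1, pdv_mul hak (hEk k), ← h2]
  simp only [pdS, pdv]
  ring

lemma tw_expand (hu : ContDiff ℝ 2 u) (hdet : ∀ x, (gramMat u x).det ≠ 0)
    (hw : ContDiff ℝ 1 w) (x : Fin 2 → ℝ) (j : Fin 2) (k : Fin 4) :
    pd4 (twfield u w) x j k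
      = ∑ i', (pdS (fun y => Tmat u y k i') x j * w x i'
          + Tmat u x k i' * pdS (fun y => w y i') x j) := by
  have hT : ∀ (k : Fin 4) (i : Fin 2), DifferentiableAt ℝ (fun y => Tmat u y k i) x :=
    fun k i => Tmat_diff hu hdet k i x
  have hwi : ∀ i, DifferentiableAt ℝ (fun y => w y i) x := fun i => diff_wi hw i x
  have hsum : ∀ (k : Fin 4), DifferentiableAt ℝ (fun y => ∑ i', Tmat u y k i' * w y i') x :=
    fun k => DifferentiableAt.fun_sum fun i _ => (hT k i).mul (hwi i)
  have h1 : pd4 (twfield u w) x j k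
      = pdv (fun y => ∑ i', Tmat u y k i' * w y i') x (Pi.single j 1) :=
    pd4_eq_comp (fun k => hsum k) j k
  rw [h1, pdv_sum (fun i' => (hT k i').fun_mul (hwi i'))]
  refine Finset.sum_congr rfl fun i' _ => ?_
  rw [pdv_mul (hT k i') (hwi i')]
  simp only [pdS, pdv]
  ring

lemma EdE (hE : ContDiff ℝ 1 E) (hEu : ∀ x, ∑ k, (E x k) ^ 2 = 1) (x : Fin 2 → ℝ)
    (j : Fin 2) : ∑ k, E x k * pd4 E x j k = 0 := by
  have hEk : ∀ k, DifferentiableAt ℝ (fun y => E y k) x := fun k => diff_Ek hE k x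
  have h2 : ∀ k, pd4 E x j k = pdv (fun y => E y k) x (Pi.single j 1) :=
    fun k => pd4_eq_comp hEk j k
  have hc : pdv (fun y => ∑ k, E y k * E y k) x (Pi.single j 1) = 0 := by
    have : (fun y => ∑ k, E y k * E y k) = fun _ => 1 := by
      funext y
      rw [← hEu y]
      exact Finset.sum_congr rfl fun k _ => (sq (E y k)).symm
    rw [pdv, this, fderiv_fun_const]
    rfl
  rw [pdv_sum (fun k => (hEk k).fun_mul (hEk k))] at hc
  have hc2 : ∑ k, 2 * (E x k * pdv (fun y => E y k) x (Pi.single j 1)) = 0 := by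
    rw [← hc]
    exact Finset.sum_congr rfl fun k _ => by rw [pdv_mul (hEk k) (hEk k)]; ring
  simp only [h2]
  have hmul : ∑ k : Fin 4, 2 * (E x k * pdv (fun y => E y k) x (Pi.single j 1))
      = 2 * ∑ k : Fin 4, E x k * pdv (fun y => E y k) x (Pi.single j 1) :=
    (Finset.mul_sum _ _ _).symm
  rw [hmul] at hc2
  linarith

lemma diffAt_div_const {f : (Fin 2 → ℝ) → ℝ} {x : Fin 2 → ℝ}
    (hf : DifferentiableAt ℝ f x) (c : ℝ) : DifferentiableAt ℝ (fun y => f y / c) x := by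
  simp only [div_eq_mul_inv]; exact hf.mul_const _

lemma diff_tau : Differentiable ℝ (fun y : Fin 2 → ℝ => ∑ i, y i * η i) :=
  Differentiable.fun_sum fun i _ =>
    (differentiable_pi.mp differentiable_id i).mul_const (η i)

lemma kuiper_pd4 (hu : ContDiff ℝ 2 u) (hE : ContDiff ℝ 1 E) (ha : ContDiff ℝ 1 a)
    (hw : ContDiff ℝ 1 w) (hdet : ∀ x, (gramMat u x).det ≠ 0) (hl : l ≠ 0)
    (x : Fin 2 → ℝ) (j : Fin 2) (k : Fin 4) :
    pd4 (kuiper u E a η w l) x j k =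
      pd4 u x j k
      + Real.sqrt 2 * Real.cos (l * ∑ i, x i * η i) * η j * (a x * E x k)
      + Real.sqrt 2 * Real.sin (l * ∑ i, x i * η i) / l * pd4 (aEfield a E) x j k
      + (-(1/2) * Real.cos (2 * (l * ∑ i, x i * η i))) * η j * vfield u a η x k
      + (-(1/4) * Real.sin (2 * (l * ∑ i, x i * η i))) / l * pd4 (vfield u a η) x j k
      + pd4 (twfield u w) x j k := by
  set v : Fin 2 → ℝ := Pi.single j 1 with hv
  have hak : DifferentiableAt ℝ a x := diff_a ha x
  have hEk : ∀ k, DifferentiableAt ℝ (fun y => E y k) x := fun k => diff_Ek hE k x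
  have hwi : ∀ i, DifferentiableAt ℝ (fun y => w y i) x := fun i => diff_wi hw i x
  have huk : ∀ k, DifferentiableAt ℝ (fun y => u y k) x := fun k => diff_uk hu k x
  have hT : ∀ (k : Fin 4) (i : Fin 2), DifferentiableAt ℝ (fun y => Tmat u y k i) x :=
    fun k i => Tmat_diff hu hdet k i x
  have dτ : DifferentiableAt ℝ (fun y : Fin 2 → ℝ => ∑ i, y i * η i) x := diff_tau x
  have dlτ : DifferentiableAt ℝ (fun y : Fin 2 → ℝ => l * ∑ i, y i * η i) x := dτ.const_mul l
  have d2lτ : DifferentiableAt ℝ (fun y : Fin 2 → ℝ => 2 * (l * ∑ i, y i * η i)) x :=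
    dlτ.const_mul 2
  have dsin1 : DifferentiableAt ℝ (fun y : Fin 2 → ℝ => Real.sin (l * ∑ i, y i * η i)) x :=
    Real.differentiable_sin.differentiableAt.comp x dlτ
  have dsin2 : DifferentiableAt ℝ
      (fun y : Fin 2 → ℝ => Real.sin (2 * (l * ∑ i, y i * η i))) x :=
    Real.differentiable_sin.differentiableAt.comp x d2lτ
  have dg1 : DifferentiableAt ℝ
      (fun y : Fin 2 → ℝ => Real.sqrt 2 * Real.sin (l * ∑ i, y i * η i) / l) x :=
    diffAt_div_const (dsin1.const_mul (Real.sqrt 2)) l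
  have dg2 : DifferentiableAt ℝ
      (fun y : Fin 2 → ℝ => -(1/4) * Real.sin (2 * (l * ∑ i, y i * η i)) / l) x :=
    diffAt_div_const (dsin2.const_mul (-(1/4))) l
  have dF1 : DifferentiableAt ℝ (fun y => a y * E y k) x := hak.mul (hEk k)
  have dF2 : DifferentiableAt ℝ (fun y => a y ^ 2 * ∑ i, Tmat u y k i * η i) x :=
    (hak.pow 2).mul (DifferentiableAt.fun_sum fun i _ => (hT k i).mul_const (η i))
  have dF3 : DifferentiableAt ℝ (fun y => ∑ i, Tmat u y k i * w y i) x :=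
    DifferentiableAt.fun_sum fun i _ => (hT k i).mul (hwi i)
  have hcomp : ∀ k', DifferentiableAt ℝ (fun y => kuiper u E a η w l y k') x := by
    intro k'
    have dF1' : DifferentiableAt ℝ (fun y => a y * E y k') x := hak.mul (hEk k')
    have dF2' : DifferentiableAt ℝ (fun y => a y ^ 2 * ∑ i, Tmat u y k' i * η i) x :=
      (hak.pow 2).mul (DifferentiableAt.fun_sum fun i _ => (hT k' i).mul_const (η i))
    have dF3' : DifferentiableAt ℝ (fun y => ∑ i, Tmat u y k' i * w y i) x :=
      DifferentiableAt.fun_sum fun i _ => (hT k' i).mul (hwi i)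
    have : (fun y => kuiper u E a η w l y k')
        = fun y => u y k' + (Real.sqrt 2 * Real.sin (l * ∑ i, y i * η i) / l * (a y * E y k')
            + (-(1/4) * Real.sin (2 * (l * ∑ i, y i * η i)) / l
                * (a y ^ 2 * ∑ i, Tmat u y k' i * η i)
              + ∑ i, Tmat u y k' i * w y i)) := by
      funext y; simp only [kuiper]; ring
    rw [this]
    exact (huk k').add ((dg1.mul dF1').add ((dg2.mul dF2').add dF3'))
  have h1 : pd4 (kuiper u E a η w l) x j k
      = pdv (fun y => kuiper u E a η w l y k) x v := pd4_eq_comp hcomp j k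
  have hfun : (fun y => kuiper u E a η w l y k)
      = fun y => u y k + (Real.sqrt 2 * Real.sin (l * ∑ i, y i * η i) / l * (a y * E y k)
          + (-(1/4) * Real.sin (2 * (l * ∑ i, y i * η i)) / l
              * (a y ^ 2 * ∑ i, Tmat u y k i * η i)
            + ∑ i, Tmat u y k i * w y i)) := by
    funext y; simp only [kuiper]; ring
  rw [h1, hfun, pdv_add (huk k) ((dg1.fun_mul dF1).fun_add ((dg2.fun_mul dF2).fun_add dF3)),
    pdv_add (dg1.fun_mul dF1) ((dg2.fun_mul dF2).fun_add dF3), pdv_add (dg2.fun_mul dF2) dF3,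
    pdv_mul dg1 dF1, pdv_mul dg2 dF2]
  have hg1 : pdv (fun y : Fin 2 → ℝ => Real.sqrt 2 * Real.sin (l * ∑ i, y i * η i) / l) x v
      = Real.sqrt 2 * Real.cos (l * ∑ i, x i * η i) * η j := by
    rw [pdv_div_const (dsin1.const_mul (Real.sqrt 2)), pdv_const_mul dsin1,
      pdv_sin dlτ, pdv_const_mul dτ, hv, pdv_tau' η j]
    field_simp
  have hg2 : pdv (fun y : Fin 2 → ℝ => -(1/4) * Real.sin (2 * (l * ∑ i, y i * η i)) / l) x v
      = -(1/2) * Real.cos (2 * (l * ∑ i, x i * η i)) * η j := by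
    rw [pdv_div_const (dsin2.const_mul (-(1/4))), pdv_const_mul dsin2,
      pdv_sin d2lτ, pdv_const_mul dlτ, pdv_const_mul dτ, hv, pdv_tau' η j]
    field_simp
    ring
  rw [hg1, hg2]
  have e1 : pd4 u x j k = pdv (fun y => u y k) x v := pd4_eq_comp huk j k
  have e2 : pd4 (aEfield a E) x j k = pdv (fun y => a y * E y k) x v :=
    pd4_eq_comp (fun k => hak.mul (hEk k)) j k
  have e3 : pd4 (vfield u a η) x j k
      = pdv (fun y => a y ^ 2 * ∑ i, Tmat u y k i * η i) x v :=
    pd4_eq_comp (fun k => (hak.pow 2).mul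
      (DifferentiableAt.fun_sum fun i _ => (hT k i).mul_const (η i))) j k
  have e4 : pd4 (twfield u w) x j k = pdv (fun y => ∑ i, Tmat u y k i * w y i) x v :=
    pd4_eq_comp (fun k => DifferentiableAt.fun_sum fun i _ => (hT k i).mul (hwi i)) j k
  rw [e1, e2, e3, e4]
  simp only [vfield]
  ring

-- T(1,4)
lemma rel_DV (hdet : ∀ x, (gramMat u x).det ≠ 0) (x : Fin 2 → ℝ) (i' : Fin 2) :
    ∑ k, pd4 u x i' k * vfield u a η x k = a x ^ 2 * η i' := by
  simp only [vfield]
  calc ∑ k, pd4 u x i' k * (a x ^ 2 * ∑ i2, Tmat u x k i2 * η i2)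
      = ∑ k, ∑ i2, a x ^ 2 * (pd4 u x i' k * Tmat u x k i2) * η i2 := by
        refine Finset.sum_congr rfl fun k _ => ?_
        rw [Finset.mul_sum, Finset.mul_sum]
        exact Finset.sum_congr rfl fun i2 _ => by ring
    _ = ∑ i2, a x ^ 2 * (∑ k, pd4 u x i' k * Tmat u x k i2) * η i2 := by
        rw [Finset.sum_comm]
        refine Finset.sum_congr rfl fun i2 _ => ?_
        simp only [Finset.mul_sum, Finset.sum_mul]
    _ = a x ^ 2 * η i' := by
        simp [DT_eq hdet, ite_mul]

-- T(2,4)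
lemma rel_EV (hEn : ∀ x, ∀ i, ∑ k, pd4 u x i k * E x k = 0) (x : Fin 2 → ℝ) :
    ∑ k, E x k * vfield u a η x k = 0 := by
  simp only [vfield]
  calc ∑ k, E x k * (a x ^ 2 * ∑ i2, Tmat u x k i2 * η i2)
      = ∑ k, ∑ i2, a x ^ 2 * (E x k * Tmat u x k i2) * η i2 := by
        refine Finset.sum_congr rfl fun k _ => ?_
        rw [Finset.mul_sum, Finset.mul_sum]
        exact Finset.sum_congr rfl fun i2 _ => by ring
    _ = ∑ i2, a x ^ 2 * (∑ k, E x k * Tmat u x k i2) * η i2 := by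
        rw [Finset.sum_comm]
        refine Finset.sum_congr rfl fun i2 _ => ?_
        simp only [Finset.mul_sum, Finset.sum_mul]
    _ = 0 := by
        simp only [ET_eq hEn, mul_zero, zero_mul, Finset.sum_const_zero]

-- T(1,3)
lemma rel_DP (ha : ContDiff ℝ 1 a) (hE : ContDiff ℝ 1 E)
    (hEn : ∀ x, ∀ i, ∑ k, pd4 u x i k * E x k = 0) (x : Fin 2 → ℝ) (i' j' : Fin 2) :
    ∑ k, pd4 u x i' k * pd4 (aEfield a E) x j' k
      = a x * ∑ k, pd4 u x i' k * pd4 E x j' k := by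
  simp only [aE_expand ha hE]
  rw [Finset.mul_sum]
  have : ∑ k, pd4 u x i' k * (pdS a x j' * E x k + a x * pd4 E x j' k)
      = pdS a x j' * (∑ k, pd4 u x i' k * E x k)
        + ∑ k, a x * (pd4 u x i' k * pd4 E x j' k) := by
    rw [Finset.mul_sum, ← Finset.sum_add_distrib]
    exact Finset.sum_congr rfl fun k _ => by ring
  rw [this, hEn x i', mul_zero, zero_add]

-- T(2,3)
lemma rel_EP (ha : ContDiff ℝ 1 a) (hE : ContDiff ℝ 1 E)
    (hEu : ∀ x, ∑ k, (E x k) ^ 2 = 1) (x : Fin 2 → ℝ) (j' : Fin 2) :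
    ∑ k, E x k * pd4 (aEfield a E) x j' k = pdS a x j' := by
  simp only [aE_expand ha hE]
  have : ∑ k, E x k * (pdS a x j' * E x k + a x * pd4 E x j' k)
      = pdS a x j' * (∑ k, E x k ^ 2) + a x * ∑ k, E x k * pd4 E x j' k := by
    rw [Finset.mul_sum, Finset.mul_sum, ← Finset.sum_add_distrib]
    exact Finset.sum_congr rfl fun k _ => by ring
  rw [this, hEu x, EdE hE hEu, mul_one, mul_zero, add_zero]

-- T(2,2)
lemma rel_EE (hEu : ∀ x, ∑ k, (E x k) ^ 2 = 1) (x : Fin 2 → ℝ) :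
    ∑ k, E x k * E x k = 1 := by
  rw [← hEu x]
  exact Finset.sum_congr rfl fun k _ => (sq (E x k)).symm

-- T(3,3)
lemma rel_PP (ha : ContDiff ℝ 1 a) (hE : ContDiff ℝ 1 E)
    (hEu : ∀ x, ∑ k, (E x k) ^ 2 = 1) (x : Fin 2 → ℝ) (i' j' : Fin 2) :
    ∑ k, pd4 (aEfield a E) x i' k * pd4 (aEfield a E) x j' k
      = pdS a x i' * pdS a x j' + a x ^ 2 * ∑ k, pd4 E x i' k * pd4 E x j' k := by
  simp only [aE_expand ha hE]
  have : ∑ k, (pdS a x i' * E x k + a x * pd4 E x i' k)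
        * (pdS a x j' * E x k + a x * pd4 E x j' k)
      = pdS a x i' * pdS a x j' * (∑ k, E x k ^ 2)
        + (pdS a x i' * a x) * (∑ k, E x k * pd4 E x j' k)
        + (pdS a x j' * a x) * (∑ k, E x k * pd4 E x i' k)
        + a x ^ 2 * ∑ k, pd4 E x i' k * pd4 E x j' k := by
    simp only [Finset.mul_sum, ← Finset.sum_add_distrib]
    exact Finset.sum_congr rfl fun k _ => by ring
  rw [this, hEu x, EdE hE hEu, EdE hE hEu]
  ring

-- T(3,4)
lemma rel_PV (ha : ContDiff ℝ 1 a) (hE : ContDiff ℝ 1 E)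
    (hEn : ∀ x, ∀ i, ∑ k, pd4 u x i k * E x k = 0) (x : Fin 2 → ℝ) (j' : Fin 2) :
    ∑ k, vfield u a η x k * pd4 (aEfield a E) x j' k
      = a x ^ 3 * ∑ i', η i' * ∑ k, Tmat u x k i' * pd4 E x j' k := by
  simp only [aE_expand ha hE, vfield]
  calc ∑ k, (a x ^ 2 * ∑ i2, Tmat u x k i2 * η i2)
        * (pdS a x j' * E x k + a x * pd4 E x j' k)
      = ∑ k, ∑ i2, (a x ^ 2 * pdS a x j' * (η i2 * (E x k * Tmat u x k i2))
          + a x ^ 3 * (η i2 * (Tmat u x k i2 * pd4 E x j' k))) := by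
        refine Finset.sum_congr rfl fun k _ => ?_
        rw [Finset.mul_sum, Finset.sum_mul]
        exact Finset.sum_congr rfl fun i2 _ => by ring
    _ = ∑ i2, ∑ k, (a x ^ 2 * pdS a x j' * (η i2 * (E x k * Tmat u x k i2))
          + a x ^ 3 * (η i2 * (Tmat u x k i2 * pd4 E x j' k))) := by rw [Finset.sum_comm]
    _ = ∑ i2, (a x ^ 2 * pdS a x j' * (η i2 * ∑ k, E x k * Tmat u x k i2)
          + a x ^ 3 * (η i2 * ∑ k, Tmat u x k i2 * pd4 E x j' k)) := by
        refine Finset.sum_congr rfl fun i2 _ => ?_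
        rw [Finset.sum_add_distrib]
        simp only [Finset.mul_sum]
    _ = a x ^ 3 * ∑ i', η i' * ∑ k, Tmat u x k i' * pd4 E x j' k := by
        simp only [ET_eq hEn, mul_zero, zero_add, Finset.mul_sum]

lemma sum_mul_comm (f g : Fin 4 → ℝ) : ∑ k, f k * g k = ∑ k, g k * f k :=
  Finset.sum_congr rfl fun k _ => mul_comm _ _

-- generic V-dot lemma
lemma rel_Vdot (x : Fin 2 → ℝ) (G : Fin 4 → ℝ) :
    ∑ k, vfield u a η x k * G k
      = a x ^ 2 * ∑ i2, η i2 * ∑ k, Tmat u x k i2 * G k := by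
  simp only [vfield]
  calc ∑ k, a x ^ 2 * (∑ i2, Tmat u x k i2 * η i2) * G k
      = ∑ k, ∑ i2, a x ^ 2 * (η i2 * (Tmat u x k i2 * G k)) := by
        refine Finset.sum_congr rfl fun k _ => ?_
        rw [Finset.mul_sum, Finset.sum_mul]
        exact Finset.sum_congr rfl fun i2 _ => by ring
    _ = ∑ i2, ∑ k, a x ^ 2 * (η i2 * (Tmat u x k i2 * G k)) := by rw [Finset.sum_comm]
    _ = a x ^ 2 * ∑ i2, η i2 * ∑ k, Tmat u x k i2 * G k := by
        simp only [Finset.mul_sum]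
  -- note: vfield x k = a x ^ 2 * ∑ ...; multiplication shape handled above

lemma rel_VV (x : Fin 2 → ℝ) :
    ∑ k, vfield u a η x k * vfield u a η x k
      = a x ^ 4 * ∑ k, (∑ i2, Tmat u x k i2 * η i2) ^ 2 := by
  simp only [vfield]
  rw [Finset.mul_sum]
  exact Finset.sum_congr rfl fun k _ => by ring

lemma rel_DW (hu : ContDiff ℝ 2 u) (hdet : ∀ x, (gramMat u x).det ≠ 0)
    (hw : ContDiff ℝ 1 w) (x : Fin 2 → ℝ) (i' j' : Fin 2) :
    ∑ k, pd4 u x i' k * pd4 (twfield u w) x j' k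
      = (∑ k, pd4 u x i' k * ∑ i2, pdS (fun y => Tmat u y k i2) x j' * w x i2)
        + pdS (fun y => w y i') x j' := by
  simp only [tw_expand hu hdet hw]
  calc ∑ k, pd4 u x i' k * ∑ i2, (pdS (fun y => Tmat u y k i2) x j' * w x i2
          + Tmat u x k i2 * pdS (fun y => w y i2) x j')
      = ∑ k, ((∑ i2, pd4 u x i' k * (pdS (fun y => Tmat u y k i2) x j' * w x i2))
          + ∑ i2, pd4 u x i' k * (Tmat u x k i2 * pdS (fun y => w y i2) x j')) := by
        refine Finset.sum_congr rfl fun k _ => ?_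
        rw [Finset.sum_add_distrib, mul_add, Finset.mul_sum, Finset.mul_sum]
    _ = (∑ k, ∑ i2, pd4 u x i' k * (pdS (fun y => Tmat u y k i2) x j' * w x i2))
        + ∑ k, ∑ i2, pd4 u x i' k * (Tmat u x k i2 * pdS (fun y => w y i2) x j') := by
        rw [Finset.sum_add_distrib]
    _ = (∑ k, pd4 u x i' k * ∑ i2, pdS (fun y => Tmat u y k i2) x j' * w x i2)
        + pdS (fun y => w y i') x j' := by
        congr 1
        · exact Finset.sum_congr rfl fun k _ => (Finset.mul_sum _ _ _).symm
        · rw [Finset.sum_comm]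
          calc ∑ i2, ∑ k, pd4 u x i' k * (Tmat u x k i2 * pdS (fun y => w y i2) x j')
              = ∑ i2, (∑ k, pd4 u x i' k * Tmat u x k i2) * pdS (fun y => w y i2) x j' := by
                refine Finset.sum_congr rfl fun i2 _ => ?_
                rw [Finset.sum_mul]
                exact Finset.sum_congr rfl fun k _ => by ring
            _ = pdS (fun y => w y i') x j' := by
                simp [DT_eq hdet, ite_mul]

lemma ip_expand (α β γ δ α' β' γ' δ' : ℝ) (D1 D2 P1 P2 Q1 Q2 W1 W2 Ev V : Fin 4 → ℝ) :
    ∑ k, (D1 k + α * Ev k + β * P1 k + γ * V k + δ * Q1 k + W1 k)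
      * (D2 k + α' * Ev k + β' * P2 k + γ' * V k + δ' * Q2 k + W2 k)
    = (∑ k, D1 k * D2 k)
      + α' * (∑ k, D1 k * Ev k)
      + β' * (∑ k, D1 k * P2 k)
      + γ' * (∑ k, D1 k * V k)
      + δ' * (∑ k, D1 k * Q2 k)
      + (∑ k, D1 k * W2 k)
      + α * (∑ k, Ev k * D2 k)
      + α * α' * (∑ k, Ev k * Ev k)
      + α * β' * (∑ k, Ev k * P2 k)
      + α * γ' * (∑ k, Ev k * V k)
      + α * δ' * (∑ k, Ev k * Q2 k)
      + α * (∑ k, Ev k * W2 k)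
      + β * (∑ k, P1 k * D2 k)
      + β * α' * (∑ k, P1 k * Ev k)
      + β * β' * (∑ k, P1 k * P2 k)
      + β * γ' * (∑ k, P1 k * V k)
      + β * δ' * (∑ k, P1 k * Q2 k)
      + β * (∑ k, P1 k * W2 k)
      + γ * (∑ k, V k * D2 k)
      + γ * α' * (∑ k, V k * Ev k)
      + γ * β' * (∑ k, V k * P2 k)
      + γ * γ' * (∑ k, V k * V k)
      + γ * δ' * (∑ k, V k * Q2 k)
      + γ * (∑ k, V k * W2 k)
      + δ * (∑ k, Q1 k * D2 k)
      + δ * α' * (∑ k, Q1 k * Ev k)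
      + δ * β' * (∑ k, Q1 k * P2 k)
      + δ * γ' * (∑ k, Q1 k * V k)
      + δ * δ' * (∑ k, Q1 k * Q2 k)
      + δ * (∑ k, Q1 k * W2 k)
      + (∑ k, W1 k * D2 k)
      + α' * (∑ k, W1 k * Ev k)
      + β' * (∑ k, W1 k * P2 k)
      + γ' * (∑ k, W1 k * V k)
      + δ' * (∑ k, W1 k * Q2 k)
      + (∑ k, W1 k * W2 k) := by
  calc ∑ k, (D1 k + α * Ev k + β * P1 k + γ * V k + δ * Q1 k + W1 k)
      * (D2 k + α' * Ev k + β' * P2 k + γ' * V k + δ' * Q2 k + W2 k)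
      = ∑ k, ((D1 k * D2 k)
        + α' * (D1 k * Ev k)
        + β' * (D1 k * P2 k)
        + γ' * (D1 k * V k)
        + δ' * (D1 k * Q2 k)
        + (D1 k * W2 k)
        + α * (Ev k * D2 k)
        + α * α' * (Ev k * Ev k)
        + α * β' * (Ev k * P2 k)
        + α * γ' * (Ev k * V k)
        + α * δ' * (Ev k * Q2 k)
        + α * (Ev k * W2 k)
        + β * (P1 k * D2 k)
        + β * α' * (P1 k * Ev k)
        + β * β' * (P1 k * P2 k)
        + β * γ' * (P1 k * V k)
        + β * δ' * (P1 k * Q2 k)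
        + β * (P1 k * W2 k)
        + γ * (V k * D2 k)
        + γ * α' * (V k * Ev k)
        + γ * β' * (V k * P2 k)
        + γ * γ' * (V k * V k)
        + γ * δ' * (V k * Q2 k)
        + γ * (V k * W2 k)
        + δ * (Q1 k * D2 k)
        + δ * α' * (Q1 k * Ev k)
        + δ * β' * (Q1 k * P2 k)
        + δ * γ' * (Q1 k * V k)
        + δ * δ' * (Q1 k * Q2 k)
        + δ * (Q1 k * W2 k)
        + (W1 k * D2 k)
        + α' * (W1 k * Ev k)
        + β' * (W1 k * P2 k)
        + γ' * (W1 k * V k)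
        + δ' * (W1 k * Q2 k)
        + (W1 k * W2 k)) := Finset.sum_congr rfl fun k _ => by ring
    _ = (∑ k, D1 k * D2 k)
      + α' * (∑ k, D1 k * Ev k)
      + β' * (∑ k, D1 k * P2 k)
      + γ' * (∑ k, D1 k * V k)
      + δ' * (∑ k, D1 k * Q2 k)
      + (∑ k, D1 k * W2 k)
      + α * (∑ k, Ev k * D2 k)
      + α * α' * (∑ k, Ev k * Ev k)
      + α * β' * (∑ k, Ev k * P2 k)
      + α * γ' * (∑ k, Ev k * V k)
      + α * δ' * (∑ k, Ev k * Q2 k)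
      + α * (∑ k, Ev k * W2 k)
      + β * (∑ k, P1 k * D2 k)
      + β * α' * (∑ k, P1 k * Ev k)
      + β * β' * (∑ k, P1 k * P2 k)
      + β * γ' * (∑ k, P1 k * V k)
      + β * δ' * (∑ k, P1 k * Q2 k)
      + β * (∑ k, P1 k * W2 k)
      + γ * (∑ k, V k * D2 k)
      + γ * α' * (∑ k, V k * Ev k)
      + γ * β' * (∑ k, V k * P2 k)
      + γ * γ' * (∑ k, V k * V k)
      + γ * δ' * (∑ k, V k * Q2 k)
      + γ * (∑ k, V k * W2 k)
      + δ * (∑ k, Q1 k * D2 k)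
      + δ * α' * (∑ k, Q1 k * Ev k)
      + δ * β' * (∑ k, Q1 k * P2 k)
      + δ * γ' * (∑ k, Q1 k * V k)
      + δ * δ' * (∑ k, Q1 k * Q2 k)
      + δ * (∑ k, Q1 k * W2 k)
      + (∑ k, W1 k * D2 k)
      + α' * (∑ k, W1 k * Ev k)
      + β' * (∑ k, W1 k * P2 k)
      + γ' * (∑ k, W1 k * V k)
      + δ' * (∑ k, W1 k * Q2 k)
      + (∑ k, W1 k * W2 k) := by
        simp only [Finset.sum_add_distrib, Finset.mul_sum]

theorem stmt6 (u E : (Fin 2 → ℝ) → (Fin 4 → ℝ)) (a : (Fin 2 → ℝ) → ℝ)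
    (η : Fin 2 → ℝ) (w : (Fin 2 → ℝ) → (Fin 2 → ℝ)) (l : ℝ)
    (hu : ContDiff ℝ 2 u) (hE : ContDiff ℝ 1 E) (ha : ContDiff ℝ 1 a)
    (hw : ContDiff ℝ 1 w)
    (himm : ∀ x, Function.Injective (fderiv ℝ u x))
    (hdet : ∀ x, (gramMat u x).det ≠ 0)
    (hEn : ∀ x, ∀ i, ∑ k, pd4 u x i k * E x k = 0)
    (hEu : ∀ x, ∑ k, (E x k) ^ 2 = 1)
    (hη : ∑ i, (η i) ^ 2 = 1) (hl : 0 < l) :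
    ∀ x : Fin 2 → ℝ,
      gramFG (kuiper u E a η w l) (kuiper u E a η w l) x - gramFG u u x
      = (a x) ^ 2 • outerM η η
        + (1 / l ^ 2) • outerM (pdS a x) (pdS a x)
        -- the four principal oscillatory error terms:
        + (((Real.sqrt 2 * Real.sin (l * ∑ i, x i * η i)) ^ 2 - 1) / l ^ 2) •
            outerM (pdS a x) (pdS a x)
        + ((Real.sqrt 2 * Real.sin (l * ∑ i, x i * η i)) *
            (Real.sqrt 2 * Real.cos (l * ∑ i, x i * η i)) / l * (2 * a x)) •
            symM (outerM (pdS a x) η)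
        + ((Real.sqrt 2 * Real.sin (l * ∑ i, x i * η i)) / l * (2 * a x)) •
            symM (gramFG u E x)
        + ((-(1 / 4) * Real.sin (2 * (l * ∑ i, x i * η i))) / l * 2) •
            symM (gramFG u (vfield u a η) x)
        -- the corrector term:
        + (2 : ℝ) • symGradV w x
        -- the residual error term R₁ (independent of w):
        + ((-(1 / 2) * Real.cos (2 * (l * ∑ i, x i * η i))) ^ 2 * (a x) ^ 4 *
            (∑ k, (∑ i, Tmat u x k i * η i) ^ 2)) • outerM η η
        + (2 * (Real.sqrt 2 * Real.cos (l * ∑ i, x i * η i)) *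
            (-(1 / 4) * Real.sin (2 * (l * ∑ i, x i * η i))) / l * a x) •
            symM (outerM η (fun j => ∑ k, E x k * pd4 (vfield u a η) x j k))
        + (2 * (Real.sqrt 2 * Real.sin (l * ∑ i, x i * η i)) *
            (-(1 / 2) * Real.cos (2 * (l * ∑ i, x i * η i))) / l * (a x) ^ 3) •
            symM (outerM η (fun j => ∑ i', η i' * ∑ k, Tmat u x k i' * pd4 E x j k))
        + (2 * (-(1 / 4) * Real.sin (2 * (l * ∑ i, x i * η i))) *
            (-(1 / 2) * Real.cos (2 * (l * ∑ i, x i * η i))) / l * (a x) ^ 2) •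
            symM (outerM η
              (fun j => ∑ i', η i' * ∑ k, Tmat u x k i' * pd4 (vfield u a η) x j k))
        + ((Real.sqrt 2 * Real.sin (l * ∑ i, x i * η i)) ^ 2 / l ^ 2 * (a x) ^ 2) •
            gramFG E E x
        + (2 * (Real.sqrt 2 * Real.sin (l * ∑ i, x i * η i)) *
            (-(1 / 4) * Real.sin (2 * (l * ∑ i, x i * η i))) / l ^ 2) •
            symM (gramFG (aEfield a E) (vfield u a η) x)
        + ((-(1 / 4) * Real.sin (2 * (l * ∑ i, x i * η i))) ^ 2 / l ^ 2) •
            gramFG (vfield u a η) (vfield u a η) x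
        -- the residual error term R₂ (involving w):
        + (2 : ℝ) • symM (fun i j =>
            ∑ k, pd4 u x i k * ∑ i', pdS (fun y => Tmat u y k i') x j * w x i')
        + (2 * (Real.sqrt 2 * Real.cos (l * ∑ i, x i * η i)) * a x) •
            symM (outerM η (fun j => ∑ k, E x k * pd4 (twfield u w) x j k))
        + (2 * (-(1 / 2) * Real.cos (2 * (l * ∑ i, x i * η i))) * (a x) ^ 2) •
            symM (outerM η
              (fun j => ∑ i', η i' * ∑ k, Tmat u x k i' * pd4 (twfield u w) x j k))
        + gramFG (twfield u w) (twfield u w) x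
        + (2 * (Real.sqrt 2 * Real.sin (l * ∑ i, x i * η i)) / l) •
            symM (gramFG (aEfield a E) (twfield u w) x)
        + (2 * (-(1 / 4) * Real.sin (2 * (l * ∑ i, x i * η i))) / l) •
            symM (gramFG (vfield u a η) (twfield u w) x) := by
  intro x
  funext i j
  have hl' : l ≠ 0 := ne_of_gt hl
  have key := kuiper_pd4 (η := η) hu hE ha hw hdet hl' x
  have expand : (∑ k, pd4 (kuiper u E a η w l) x i k * pd4 (kuiper u E a η w l) x j k)
      = (∑ k, pd4 u x i k * pd4 u x j k)
        + (Real.sqrt 2 * Real.cos (l * ∑ i, x i * η i) * η j * a x) * (∑ k, pd4 u x i k * E x k)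
        + (Real.sqrt 2 * Real.sin (l * ∑ i, x i * η i) / l) * (∑ k, pd4 u x i k * pd4 (aEfield a E) x j k)
        + (-(1/2) * Real.cos (2 * (l * ∑ i, x i * η i)) * η j) * (∑ k, pd4 u x i k * vfield u a η x k)
        + (-(1/4) * Real.sin (2 * (l * ∑ i, x i * η i)) / l) * (∑ k, pd4 u x i k * pd4 (vfield u a η) x j k)
        + (∑ k, pd4 u x i k * pd4 (twfield u w) x j k)
        + (Real.sqrt 2 * Real.cos (l * ∑ i, x i * η i) * η i * a x) * (∑ k, E x k * pd4 u x j k)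
        + (Real.sqrt 2 * Real.cos (l * ∑ i, x i * η i) * η i * a x) * (Real.sqrt 2 * Real.cos (l * ∑ i, x i * η i) * η j * a x) * (∑ k, E x k * E x k)
        + (Real.sqrt 2 * Real.cos (l * ∑ i, x i * η i) * η i * a x) * (Real.sqrt 2 * Real.sin (l * ∑ i, x i * η i) / l) * (∑ k, E x k * pd4 (aEfield a E) x j k)
        + (Real.sqrt 2 * Real.cos (l * ∑ i, x i * η i) * η i * a x) * (-(1/2) * Real.cos (2 * (l * ∑ i, x i * η i)) * η j) * (∑ k, E x k * vfield u a η x k)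
        + (Real.sqrt 2 * Real.cos (l * ∑ i, x i * η i) * η i * a x) * (-(1/4) * Real.sin (2 * (l * ∑ i, x i * η i)) / l) * (∑ k, E x k * pd4 (vfield u a η) x j k)
        + (Real.sqrt 2 * Real.cos (l * ∑ i, x i * η i) * η i * a x) * (∑ k, E x k * pd4 (twfield u w) x j k)
        + (Real.sqrt 2 * Real.sin (l * ∑ i, x i * η i) / l) * (∑ k, pd4 (aEfield a E) x i k * pd4 u x j k)
        + (Real.sqrt 2 * Real.sin (l * ∑ i, x i * η i) / l) * (Real.sqrt 2 * Real.cos (l * ∑ i, x i * η i) * η j * a x) * (∑ k, pd4 (aEfield a E) x i k * E x k)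
        + (Real.sqrt 2 * Real.sin (l * ∑ i, x i * η i) / l) * (Real.sqrt 2 * Real.sin (l * ∑ i, x i * η i) / l) * (∑ k, pd4 (aEfield a E) x i k * pd4 (aEfield a E) x j k)
        + (Real.sqrt 2 * Real.sin (l * ∑ i, x i * η i) / l) * (-(1/2) * Real.cos (2 * (l * ∑ i, x i * η i)) * η j) * (∑ k, pd4 (aEfield a E) x i k * vfield u a η x k)
        + (Real.sqrt 2 * Real.sin (l * ∑ i, x i * η i) / l) * (-(1/4) * Real.sin (2 * (l * ∑ i, x i * η i)) / l) * (∑ k, pd4 (aEfield a E) x i k * pd4 (vfield u a η) x j k)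
        + (Real.sqrt 2 * Real.sin (l * ∑ i, x i * η i) / l) * (∑ k, pd4 (aEfield a E) x i k * pd4 (twfield u w) x j k)
        + (-(1/2) * Real.cos (2 * (l * ∑ i, x i * η i)) * η i) * (∑ k, vfield u a η x k * pd4 u x j k)
        + (-(1/2) * Real.cos (2 * (l * ∑ i, x i * η i)) * η i) * (Real.sqrt 2 * Real.cos (l * ∑ i, x i * η i) * η j * a x) * (∑ k, vfield u a η x k * E x k)
        + (-(1/2) * Real.cos (2 * (l * ∑ i, x i * η i)) * η i) * (Real.sqrt 2 * Real.sin (l * ∑ i, x i * η i) / l) * (∑ k, vfield u a η x k * pd4 (aEfield a E) x j k)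
        + (-(1/2) * Real.cos (2 * (l * ∑ i, x i * η i)) * η i) * (-(1/2) * Real.cos (2 * (l * ∑ i, x i * η i)) * η j) * (∑ k, vfield u a η x k * vfield u a η x k)
        + (-(1/2) * Real.cos (2 * (l * ∑ i, x i * η i)) * η i) * (-(1/4) * Real.sin (2 * (l * ∑ i, x i * η i)) / l) * (∑ k, vfield u a η x k * pd4 (vfield u a η) x j k)
        + (-(1/2) * Real.cos (2 * (l * ∑ i, x i * η i)) * η i) * (∑ k, vfield u a η x k * pd4 (twfield u w) x j k)
        + (-(1/4) * Real.sin (2 * (l * ∑ i, x i * η i)) / l) * (∑ k, pd4 (vfield u a η) x i k * pd4 u x j k)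
        + (-(1/4) * Real.sin (2 * (l * ∑ i, x i * η i)) / l) * (Real.sqrt 2 * Real.cos (l * ∑ i, x i * η i) * η j * a x) * (∑ k, pd4 (vfield u a η) x i k * E x k)
        + (-(1/4) * Real.sin (2 * (l * ∑ i, x i * η i)) / l) * (Real.sqrt 2 * Real.sin (l * ∑ i, x i * η i) / l) * (∑ k, pd4 (vfield u a η) x i k * pd4 (aEfield a E) x j k)
        + (-(1/4) * Real.sin (2 * (l * ∑ i, x i * η i)) / l) * (-(1/2) * Real.cos (2 * (l * ∑ i, x i * η i)) * η j) * (∑ k, pd4 (vfield u a η) x i k * vfield u a η x k)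
        + (-(1/4) * Real.sin (2 * (l * ∑ i, x i * η i)) / l) * (-(1/4) * Real.sin (2 * (l * ∑ i, x i * η i)) / l) * (∑ k, pd4 (vfield u a η) x i k * pd4 (vfield u a η) x j k)
        + (-(1/4) * Real.sin (2 * (l * ∑ i, x i * η i)) / l) * (∑ k, pd4 (vfield u a η) x i k * pd4 (twfield u w) x j k)
        + (∑ k, pd4 (twfield u w) x i k * pd4 u x j k)
        + (Real.sqrt 2 * Real.cos (l * ∑ i, x i * η i) * η j * a x) * (∑ k, pd4 (twfield u w) x i k * E x k)
        + (Real.sqrt 2 * Real.sin (l * ∑ i, x i * η i) / l) * (∑ k, pd4 (twfield u w) x i k * pd4 (aEfield a E) x j k)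
        + (-(1/2) * Real.cos (2 * (l * ∑ i, x i * η i)) * η j) * (∑ k, pd4 (twfield u w) x i k * vfield u a η x k)
        + (-(1/4) * Real.sin (2 * (l * ∑ i, x i * η i)) / l) * (∑ k, pd4 (twfield u w) x i k * pd4 (vfield u a η) x j k)
        + (∑ k, pd4 (twfield u w) x i k * pd4 (twfield u w) x j k) := by
    calc ∑ k, pd4 (kuiper u E a η w l) x i k * pd4 (kuiper u E a η w l) x j k
        = ∑ k, (pd4 u x i k + (Real.sqrt 2 * Real.cos (l * ∑ i, x i * η i) * η i * a x) * E x k + (Real.sqrt 2 * Real.sin (l * ∑ i, x i * η i) / l) * pd4 (aEfield a E) x i k + (-(1/2) * Real.cos (2 * (l * ∑ i, x i * η i)) * η i) * vfield u a η x k + (-(1/4) * Real.sin (2 * (l * ∑ i, x i * η i)) / l) * pd4 (vfield u a η) x i k + pd4 (twfield u w) x i k)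
          * (pd4 u x j k + (Real.sqrt 2 * Real.cos (l * ∑ i, x i * η i) * η j * a x) * E x k + (Real.sqrt 2 * Real.sin (l * ∑ i, x i * η i) / l) * pd4 (aEfield a E) x j k + (-(1/2) * Real.cos (2 * (l * ∑ i, x i * η i)) * η j) * vfield u a η x k + (-(1/4) * Real.sin (2 * (l * ∑ i, x i * η i)) / l) * pd4 (vfield u a η) x j k + pd4 (twfield u w) x j k) :=
          Finset.sum_congr rfl fun k _ => by rw [key i k, key j k]; ring
      _ = (∑ k, pd4 u x i k * pd4 u x j k)
        + (Real.sqrt 2 * Real.cos (l * ∑ i, x i * η i) * η j * a x) * (∑ k, pd4 u x i k * E x k)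
        + (Real.sqrt 2 * Real.sin (l * ∑ i, x i * η i) / l) * (∑ k, pd4 u x i k * pd4 (aEfield a E) x j k)
        + (-(1/2) * Real.cos (2 * (l * ∑ i, x i * η i)) * η j) * (∑ k, pd4 u x i k * vfield u a η x k)
        + (-(1/4) * Real.sin (2 * (l * ∑ i, x i * η i)) / l) * (∑ k, pd4 u x i k * pd4 (vfield u a η) x j k)
        + (∑ k, pd4 u x i k * pd4 (twfield u w) x j k)
        + (Real.sqrt 2 * Real.cos (l * ∑ i, x i * η i) * η i * a x) * (∑ k, E x k * pd4 u x j k)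
        + (Real.sqrt 2 * Real.cos (l * ∑ i, x i * η i) * η i * a x) * (Real.sqrt 2 * Real.cos (l * ∑ i, x i * η i) * η j * a x) * (∑ k, E x k * E x k)
        + (Real.sqrt 2 * Real.cos (l * ∑ i, x i * η i) * η i * a x) * (Real.sqrt 2 * Real.sin (l * ∑ i, x i * η i) / l) * (∑ k, E x k * pd4 (aEfield a E) x j k)
        + (Real.sqrt 2 * Real.cos (l * ∑ i, x i * η i) * η i * a x) * (-(1/2) * Real.cos (2 * (l * ∑ i, x i * η i)) * η j) * (∑ k, E x k * vfield u a η x k)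
        + (Real.sqrt 2 * Real.cos (l * ∑ i, x i * η i) * η i * a x) * (-(1/4) * Real.sin (2 * (l * ∑ i, x i * η i)) / l) * (∑ k, E x k * pd4 (vfield u a η) x j k)
        + (Real.sqrt 2 * Real.cos (l * ∑ i, x i * η i) * η i * a x) * (∑ k, E x k * pd4 (twfield u w) x j k)
        + (Real.sqrt 2 * Real.sin (l * ∑ i, x i * η i) / l) * (∑ k, pd4 (aEfield a E) x i k * pd4 u x j k)
        + (Real.sqrt 2 * Real.sin (l * ∑ i, x i * η i) / l) * (Real.sqrt 2 * Real.cos (l * ∑ i, x i * η i) * η j * a x) * (∑ k, pd4 (aEfield a E) x i k * E x k)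
        + (Real.sqrt 2 * Real.sin (l * ∑ i, x i * η i) / l) * (Real.sqrt 2 * Real.sin (l * ∑ i, x i * η i) / l) * (∑ k, pd4 (aEfield a E) x i k * pd4 (aEfield a E) x j k)
        + (Real.sqrt 2 * Real.sin (l * ∑ i, x i * η i) / l) * (-(1/2) * Real.cos (2 * (l * ∑ i, x i * η i)) * η j) * (∑ k, pd4 (aEfield a E) x i k * vfield u a η x k)
        + (Real.sqrt 2 * Real.sin (l * ∑ i, x i * η i) / l) * (-(1/4) * Real.sin (2 * (l * ∑ i, x i * η i)) / l) * (∑ k, pd4 (aEfield a E) x i k * pd4 (vfield u a η) x j k)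
        + (Real.sqrt 2 * Real.sin (l * ∑ i, x i * η i) / l) * (∑ k, pd4 (aEfield a E) x i k * pd4 (twfield u w) x j k)
        + (-(1/2) * Real.cos (2 * (l * ∑ i, x i * η i)) * η i) * (∑ k, vfield u a η x k * pd4 u x j k)
        + (-(1/2) * Real.cos (2 * (l * ∑ i, x i * η i)) * η i) * (Real.sqrt 2 * Real.cos (l * ∑ i, x i * η i) * η j * a x) * (∑ k, vfield u a η x k * E x k)
        + (-(1/2) * Real.cos (2 * (l * ∑ i, x i * η i)) * η i) * (Real.sqrt 2 * Real.sin (l * ∑ i, x i * η i) / l) * (∑ k, vfield u a η x k * pd4 (aEfield a E) x j k)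
        + (-(1/2) * Real.cos (2 * (l * ∑ i, x i * η i)) * η i) * (-(1/2) * Real.cos (2 * (l * ∑ i, x i * η i)) * η j) * (∑ k, vfield u a η x k * vfield u a η x k)
        + (-(1/2) * Real.cos (2 * (l * ∑ i, x i * η i)) * η i) * (-(1/4) * Real.sin (2 * (l * ∑ i, x i * η i)) / l) * (∑ k, vfield u a η x k * pd4 (vfield u a η) x j k)
        + (-(1/2) * Real.cos (2 * (l * ∑ i, x i * η i)) * η i) * (∑ k, vfield u a η x k * pd4 (twfield u w) x j k)
        + (-(1/4) * Real.sin (2 * (l * ∑ i, x i * η i)) / l) * (∑ k, pd4 (vfield u a η) x i k * pd4 u x j k)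
        + (-(1/4) * Real.sin (2 * (l * ∑ i, x i * η i)) / l) * (Real.sqrt 2 * Real.cos (l * ∑ i, x i * η i) * η j * a x) * (∑ k, pd4 (vfield u a η) x i k * E x k)
        + (-(1/4) * Real.sin (2 * (l * ∑ i, x i * η i)) / l) * (Real.sqrt 2 * Real.sin (l * ∑ i, x i * η i) / l) * (∑ k, pd4 (vfield u a η) x i k * pd4 (aEfield a E) x j k)
        + (-(1/4) * Real.sin (2 * (l * ∑ i, x i * η i)) / l) * (-(1/2) * Real.cos (2 * (l * ∑ i, x i * η i)) * η j) * (∑ k, pd4 (vfield u a η) x i k * vfield u a η x k)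
        + (-(1/4) * Real.sin (2 * (l * ∑ i, x i * η i)) / l) * (-(1/4) * Real.sin (2 * (l * ∑ i, x i * η i)) / l) * (∑ k, pd4 (vfield u a η) x i k * pd4 (vfield u a η) x j k)
        + (-(1/4) * Real.sin (2 * (l * ∑ i, x i * η i)) / l) * (∑ k, pd4 (vfield u a η) x i k * pd4 (twfield u w) x j k)
        + (∑ k, pd4 (twfield u w) x i k * pd4 u x j k)
        + (Real.sqrt 2 * Real.cos (l * ∑ i, x i * η i) * η j * a x) * (∑ k, pd4 (twfield u w) x i k * E x k)
        + (Real.sqrt 2 * Real.sin (l * ∑ i, x i * η i) / l) * (∑ k, pd4 (twfield u w) x i k * pd4 (aEfield a E) x j k)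
        + (-(1/2) * Real.cos (2 * (l * ∑ i, x i * η i)) * η j) * (∑ k, pd4 (twfield u w) x i k * vfield u a η x k)
        + (-(1/4) * Real.sin (2 * (l * ∑ i, x i * η i)) / l) * (∑ k, pd4 (twfield u w) x i k * pd4 (vfield u a η) x j k)
        + (∑ k, pd4 (twfield u w) x i k * pd4 (twfield u w) x j k) :=
          ip_expand _ _ _ _ _ _ _ _ _ _ _ _ _ _ _ _ _ _
  have e12 : ∑ k, pd4 u x i k * E x k = 0 := hEn x i
  have e21 : ∑ k, E x k * pd4 u x j k = 0 := by rw [sum_mul_comm]; exact hEn x j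
  have e13 := rel_DP ha hE hEn x i j
  have e31 : ∑ k, pd4 (aEfield a E) x i k * pd4 u x j k
      = a x * ∑ k, pd4 u x j k * pd4 E x i k := by
    rw [sum_mul_comm]; exact rel_DP ha hE hEn x j i
  have e14 := rel_DV (a := a) (η := η) hdet x i
  have e41 : ∑ k, vfield u a η x k * pd4 u x j k = a x ^ 2 * η j := by
    rw [sum_mul_comm]; exact rel_DV hdet x j
  have e16 := rel_DW (w := w) hu hdet hw x i j
  have e61 : ∑ k, pd4 (twfield u w) x i k * pd4 u x j k
      = (∑ k, pd4 u x j k * ∑ i2, pdS (fun y => Tmat u y k i2) x i * w x i2)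
        + pdS (fun y => w y j) x i := by
    rw [sum_mul_comm]; exact rel_DW hu hdet hw x j i
  have e22 := rel_EE (E := E) hEu x
  have e23 := rel_EP ha hE hEu x j
  have e32 : ∑ k, pd4 (aEfield a E) x i k * E x k = pdS a x i := by
    rw [sum_mul_comm]; exact rel_EP ha hE hEu x i
  have e24 := rel_EV (a := a) (η := η) hEn x
  have e42 : ∑ k, vfield u a η x k * E x k = 0 := by
    rw [sum_mul_comm]; exact rel_EV hEn x
  have e33 := rel_PP ha hE hEu x i j
  have e34 : ∑ k, pd4 (aEfield a E) x i k * vfield u a η x k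
      = a x ^ 3 * ∑ i', η i' * ∑ k, Tmat u x k i' * pd4 E x i k := by
    rw [sum_mul_comm]; exact rel_PV ha hE hEn x i
  have e43 := rel_PV (η := η) ha hE hEn x j
  have e44 := rel_VV (u := u) (a := a) (η := η) x
  have e45 := rel_Vdot (u := u) (a := a) (η := η) x (pd4 (vfield u a η) x j)
  have e54 : ∑ k, pd4 (vfield u a η) x i k * vfield u a η x k
      = a x ^ 2 * ∑ i2, η i2 * ∑ k, Tmat u x k i2 * pd4 (vfield u a η) x i k := by
    rw [sum_mul_comm]; exact rel_Vdot x (pd4 (vfield u a η) x i)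
  have e46 := rel_Vdot (u := u) (a := a) (η := η) x (pd4 (twfield u w) x j)
  have e64 : ∑ k, pd4 (twfield u w) x i k * vfield u a η x k
      = a x ^ 2 * ∑ i2, η i2 * ∑ k, Tmat u x k i2 * pd4 (twfield u w) x i k := by
    rw [sum_mul_comm]; exact rel_Vdot x (pd4 (twfield u w) x i)
  have e51 := sum_mul_comm (pd4 (vfield u a η) x i) (pd4 u x j)
  have e52 := sum_mul_comm (pd4 (vfield u a η) x i) (E x)
  have e62 := sum_mul_comm (pd4 (twfield u w) x i) (E x)
  have e53 := sum_mul_comm (pd4 (vfield u a η) x i) (pd4 (aEfield a E) x j)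
  have e63 := sum_mul_comm (pd4 (twfield u w) x i) (pd4 (aEfield a E) x j)
  have e65 := sum_mul_comm (pd4 (twfield u w) x i) (pd4 (vfield u a η) x j)
  simp only [Pi.sub_apply, Pi.add_apply, Pi.smul_apply, smul_eq_mul, gramFG, symM, outerM,
    symGradV]
  rw [expand, e12, e21, e13, e31, e14, e41, e16, e61, e22, e23, e32, e24, e42, e33, e34,
    e43, e44, e45, e54, e46, e64, e51, e52, e62, e53, e63, e65]
  have h2 : Real.sqrt 2 * Real.sqrt 2 = 2 := Real.mul_self_sqrt (by norm_num)
  rw [Real.cos_two_mul (l * ∑ i, x i * η i)]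
  linear_combination (a x ^ 2 * η i * η j * Real.cos (l * ∑ i, x i * η i) ^ 2) * h2
end main
end

section
/- Suppose a sequence of numbers δₙ = a^{−bⁿ} and frequencies μₙ = a^{τ + (bⁿ−1)/(2θ)} with a, b > 1, θ ∈ (0,1), τ > 0, and a sequence of maps uₙ satisfies ‖u_{n+1} − uₙ‖₁ ≤ C δₙ^{1/2} and ‖u_{n+1} − uₙ‖₂ ≤ C δ_{n+1}^{1/2} μ_{n+1} for all n. Then for every α with 0 < α < θ, if b − 1 is sufficiently small, the sequence (uₙ) is Cauchy in C^{1,α}; more precisely ‖u_{n+1} − uₙ‖_{1,α} ≤ C a^{(τ − 1/(2θ))α} a^{−bⁿ q} where q = (1−α)/2 − bα(1/(2θ) − 1/2) > 0. -/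
theorem stmt14 (a θ τ α Cb Cint : ℝ) (ha : 1 < a) (hθ0 : 0 < θ) (hθ1 : θ < 1)
    (hτ : 0 < τ) (hα0 : 0 < α) (hαθ : α < θ) (hCb : 0 ≤ Cb) (hCi : 0 ≤ Cint) :
    ∃ ε > (0 : ℝ), ∀ b : ℝ, 1 < b → b < 1 + ε →
      (0 < (1 - α) / 2 - b * α * (1 / (2 * θ) - 1 / 2)) ∧
      ∀ (V : Type) (_ : AddCommGroup V) (n1 n2 na : V → ℝ),
        (∀ v, 0 ≤ n1 v) → (∀ v, 0 ≤ n2 v) → (∀ v, 0 ≤ na v) →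
        -- interpolation inequality ‖v‖_{1,α} ≤ C ‖v‖₂^α ‖v‖₁^{1−α}
        (∀ v, na v ≤ Cint * (n2 v) ^ α * (n1 v) ^ (1 - α)) →
        ∀ u : ℕ → V,
          (∀ n : ℕ, n1 (u (n + 1) - u n) ≤ Cb * a ^ (-(b ^ n) / 2)) →
          (∀ n : ℕ, n2 (u (n + 1) - u n) ≤
            Cb * a ^ (-(b ^ (n + 1)) / 2) * a ^ (τ + (b ^ (n + 1) - 1) / (2 * θ))) →
          ∃ C' : ℝ, 0 ≤ C' ∧
            (∀ n : ℕ, na (u (n + 1) - u n) ≤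
              C' * a ^ ((τ - 1 / (2 * θ)) * α) *
                a ^ (-(b ^ n) * ((1 - α) / 2 - b * α * (1 / (2 * θ) - 1 / 2)))) ∧
            Summable (fun n : ℕ => na (u (n + 1) - u n)) := by
  have ha0 : (0:ℝ) < a := lt_trans one_pos ha
  have hθ2 : (0:ℝ) < 2 * θ := by linarith
  have hk : 0 < α * (1 / (2 * θ) - 1 / 2) := by
    apply mul_pos hα0
    have h1 : (1:ℝ) / 2 < 1 / (2 * θ) := by
      rw [div_lt_div_iff₀ (by norm_num) hθ2]; nlinarith
    linarith
  set k := α * (1 / (2 * θ) - 1 / 2) with hkdef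
  have hq1 : 0 < (1 - α) / 2 - k := by
    have h : (1 - α) / 2 - k = (θ - α) / (2 * θ) := by
      rw [hkdef]; field_simp; ring
    rw [h]; exact div_pos (by linarith) hθ2
  refine ⟨((1 - α) / 2 - k) / k, div_pos hq1 hk, ?_⟩
  intro b hb1 hbε
  have hq : 0 < (1 - α) / 2 - b * α * (1 / (2 * θ) - 1 / 2) := by
    have heq : b * α * (1 / (2 * θ) - 1 / 2) = b * k := by rw [hkdef]; ring
    have hbk : b * k < (1 + ((1 - α) / 2 - k) / k) * k :=
      mul_lt_mul_of_pos_right hbε hk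
    have hmm : (1 + ((1 - α) / 2 - k) / k) * k = k + ((1 - α) / 2 - k) := by
      field_simp
    rw [hmm] at hbk
    linarith [heq ▸ hbk]
  refine ⟨hq, ?_⟩
  intro V _ n1 n2 na h1n h2n han hint u hu1 hu2
  set q := (1 - α) / 2 - b * α * (1 / (2 * θ) - 1 / 2) with hqdef
  have hα1 : (0:ℝ) ≤ 1 - α := by linarith
  have hmain : ∀ n : ℕ, na (u (n + 1) - u n) ≤
      Cint * Cb * a ^ ((τ - 1 / (2 * θ)) * α) * a ^ (-(b ^ n) * q) := by
    intro n
    have key : na (u (n + 1) - u n) ≤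
        Cint * (Cb * a ^ (-(b ^ (n + 1)) / 2) * a ^ (τ + (b ^ (n + 1) - 1) / (2 * θ))) ^ α
          * (Cb * a ^ (-(b ^ n) / 2)) ^ (1 - α) := by
      refine le_trans (hint _) ?_
      have h2 : (n2 (u (n + 1) - u n)) ^ α ≤
          (Cb * a ^ (-(b ^ (n + 1)) / 2) * a ^ (τ + (b ^ (n + 1) - 1) / (2 * θ))) ^ α :=
        Real.rpow_le_rpow (h2n _) (hu2 n) (le_of_lt hα0)
      have h1 : (n1 (u (n + 1) - u n)) ^ (1 - α) ≤ (Cb * a ^ (-(b ^ n) / 2)) ^ (1 - α) :=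
        Real.rpow_le_rpow (h1n _) (hu1 n) hα1
      have hn1 : (0:ℝ) ≤ (n1 (u (n + 1) - u n)) ^ (1 - α) := Real.rpow_nonneg (h1n _) _
      have hrhs2 : (0:ℝ) ≤ (Cb * a ^ (-(b ^ (n + 1)) / 2) * a ^ (τ + (b ^ (n + 1) - 1) / (2 * θ))) ^ α :=
        Real.rpow_nonneg (mul_nonneg (mul_nonneg hCb (Real.rpow_nonneg ha0.le _)) (Real.rpow_nonneg ha0.le _)) _
      calc Cint * (n2 (u (n + 1) - u n)) ^ α * (n1 (u (n + 1) - u n)) ^ (1 - α)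
          ≤ Cint * (Cb * a ^ (-(b ^ (n + 1)) / 2) * a ^ (τ + (b ^ (n + 1) - 1) / (2 * θ))) ^ α
            * (n1 (u (n + 1) - u n)) ^ (1 - α) :=
            mul_le_mul_of_nonneg_right (mul_le_mul_of_nonneg_left h2 hCi) hn1
        _ ≤ _ := mul_le_mul_of_nonneg_left h1 (mul_nonneg hCi hrhs2)
    have hrw : Cint * (Cb * a ^ (-(b ^ (n + 1)) / 2) * a ^ (τ + (b ^ (n + 1) - 1) / (2 * θ))) ^ α
          * (Cb * a ^ (-(b ^ n) / 2)) ^ (1 - α)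
        = Cint * Cb * a ^ ((τ - 1 / (2 * θ)) * α) * a ^ (-(b ^ n) * q) := by
      have hA : (0:ℝ) ≤ a ^ (-(b ^ (n + 1)) / 2) := Real.rpow_nonneg ha0.le _
      have hB : (0:ℝ) ≤ a ^ (τ + (b ^ (n + 1) - 1) / (2 * θ)) := Real.rpow_nonneg ha0.le _
      have hC : (0:ℝ) ≤ a ^ (-(b ^ n) / 2) := Real.rpow_nonneg ha0.le _
      rw [Real.mul_rpow (mul_nonneg hCb hA) hB, Real.mul_rpow hCb hA,
        Real.mul_rpow hCb hC]
      rw [← Real.rpow_mul ha0.le, ← Real.rpow_mul ha0.le, ← Real.rpow_mul ha0.le]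
      have hcb : Cb ^ α * Cb ^ (1 - α) = Cb := by
        rw [← Real.rpow_add' hCb (by norm_num : α + (1 - α) ≠ 0)]
        norm_num
      have hexp : (-(b ^ (n + 1)) / 2) * α + (τ + (b ^ (n + 1) - 1) / (2 * θ)) * α
            + (-(b ^ n) / 2) * (1 - α)
          = (τ - 1 / (2 * θ)) * α + (-(b ^ n)) * q := by
        rw [hqdef, pow_succ]
        field_simp
        ring
      calc Cint * (Cb ^ α * a ^ ((-(b ^ (n + 1)) / 2) * α) * a ^ ((τ + (b ^ (n + 1) - 1) / (2 * θ)) * α))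
            * (Cb ^ (1 - α) * a ^ ((-(b ^ n) / 2) * (1 - α)))
          = Cint * (Cb ^ α * Cb ^ (1 - α)) *
              (a ^ ((-(b ^ (n + 1)) / 2) * α) * a ^ ((τ + (b ^ (n + 1) - 1) / (2 * θ)) * α)
                * a ^ ((-(b ^ n) / 2) * (1 - α))) := by ring
        _ = Cint * Cb * a ^ ((-(b ^ (n + 1)) / 2) * α + (τ + (b ^ (n + 1) - 1) / (2 * θ)) * α
              + (-(b ^ n) / 2) * (1 - α)) := by
            rw [hcb, ← Real.rpow_add ha0, ← Real.rpow_add ha0]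
        _ = _ := by rw [hexp, Real.rpow_add ha0]; ring
    rw [hrw] at key
    exact key
  refine ⟨Cint * Cb, mul_nonneg hCi hCb, hmain, ?_⟩
  have hbound : ∀ n : ℕ, na (u (n + 1) - u n) ≤
      (Cint * Cb * a ^ ((τ - 1 / (2 * θ)) * α)) * (a ^ (-(b - 1) * q)) ^ n := by
    intro n
    refine le_trans (hmain n) ?_
    have hM : (0:ℝ) ≤ Cint * Cb * a ^ ((τ - 1 / (2 * θ)) * α) :=
      mul_nonneg (mul_nonneg hCi hCb) (Real.rpow_nonneg ha0.le _)
    refine mul_le_mul_of_nonneg_left ?_ hM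
    have hber : 1 + (n : ℝ) * (b - 1) ≤ b ^ n := by
      have h := one_add_mul_le_pow (show (-2:ℝ) ≤ b - 1 by linarith) n
      simpa using h
    have hle : -(b ^ n) * q ≤ (n : ℝ) * (-(b - 1) * q) := by nlinarith
    calc a ^ (-(b ^ n) * q) ≤ a ^ ((n : ℝ) * (-(b - 1) * q)) :=
          Real.rpow_le_rpow_left_iff ha |>.mpr hle
      _ = (a ^ (-(b - 1) * q)) ^ n := by
          rw [mul_comm, Real.rpow_mul ha0.le, Real.rpow_natCast]
  refine Summable.of_nonneg_of_le (fun n => han _) hbound ?_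
  refine Summable.mul_left _ (summable_geometric_of_lt_one (Real.rpow_nonneg ha0.le _) ?_)
  exact Real.rpow_lt_one_of_one_lt_of_neg ha (by nlinarith : -(b - 1) * q < 0)
end

section
/- Let aᵢⱼ, aᵢ,ⱼ₋₁ : ω̄ → ℝ be continuous with 1/2 ≤ aᵢⱼ, aᵢ,ⱼ₋₁ ≤ 3/2 and suppose ‖∇^{(m)}(a²ᵢⱼ − a²ᵢ,ⱼ₋₁)‖₀ ≤ C μ^m ε and ‖∇^{(m)}aᵢⱼ‖₀, ‖∇^{(m)}aᵢ,ⱼ₋₁‖₀ ≤ C μ^m for m = 0,…,M (derivatives existing). Then ‖∇^{(m)}(aᵢⱼ − aᵢ,ⱼ₋₁)‖₀ ≤ C′ μ^m ε for all m = 0,…,M, with C′ depending only on C and M. -/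
open Finset

private lemma iteratedFDeriv_sub_apply'' {E F : Type*} [NormedAddCommGroup E]
    [NormedSpace ℝ E] [NormedAddCommGroup F] [NormedSpace ℝ F]
    {i : ℕ} {f g : E → F} {x : E} (hf : ContDiff ℝ i f) (hg : ContDiff ℝ i g) :
    iteratedFDeriv ℝ i (fun y => f y - g y) x =
      iteratedFDeriv ℝ i f x - iteratedFDeriv ℝ i g x := by
  have h1 : (fun y => f y - g y) = fun y => f y + -(g y) := by
    funext y; rw [sub_eq_add_neg]
  rw [h1, iteratedFDeriv_add_apply' hf.contDiffAt hg.neg.contDiffAt]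
  have h2 : iteratedFDeriv ℝ i (fun y => -(g y)) x = -iteratedFDeriv ℝ i g x :=
    iteratedFDeriv_neg_apply
  rw [h2, sub_eq_add_neg]

private def Kfun (C : ℝ) : ℕ → ℝ
  | 0 => C
  | n + 1 => Kfun C n + C + 2 * C * 2 ^ (n + 1) * Kfun C n

private lemma Kfun_pos {C : ℝ} (hC : 0 < C) : ∀ m, 0 < Kfun C m
  | 0 => hC
  | n + 1 => by
    have := Kfun_pos hC n
    have h2 : (0:ℝ) < 2 ^ (n+1) := by positivity
    simp only [Kfun]; positivity

private lemma Kfun_mono {C : ℝ} (hC : 0 < C) : Monotone (Kfun C) := by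
  apply monotone_nat_of_le_succ
  intro n
  have := Kfun_pos hC n
  have h2 : (0:ℝ) < 2 ^ (n+1) := by positivity
  simp only [Kfun]
  nlinarith [mul_pos (mul_pos (mul_pos two_pos hC) h2) this]

theorem stmt18 (C : ℝ) (M : ℕ) (hC : 0 < C) :
    ∃ C' : ℝ, 0 < C' ∧
      ∀ (ω : Set (Fin 2 → ℝ)) (a b : (Fin 2 → ℝ) → ℝ),
        ContDiff ℝ (M : ℕ) a → ContDiff ℝ (M : ℕ) b →
        ∀ μ ε : ℝ, 1 < μ → 0 < ε → ε < 1 →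
        (∀ x ∈ closure ω, 1 / 2 ≤ a x ∧ a x ≤ 3 / 2) →
        (∀ x ∈ closure ω, 1 / 2 ≤ b x ∧ b x ≤ 3 / 2) →
        (∀ m ≤ M, ∀ x ∈ closure ω,
          ‖iteratedFDeriv ℝ m (fun y => (a y) ^ 2 - (b y) ^ 2) x‖ ≤ C * μ ^ m * ε) →
        (∀ m ≤ M, ∀ x ∈ closure ω, ‖iteratedFDeriv ℝ m a x‖ ≤ C * μ ^ m) →
        (∀ m ≤ M, ∀ x ∈ closure ω, ‖iteratedFDeriv ℝ m b x‖ ≤ C * μ ^ m) →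
        ∀ m ≤ M, ∀ x ∈ closure ω,
          ‖iteratedFDeriv ℝ m (fun y => a y - b y) x‖ ≤ C' * μ ^ m * ε := by
  refine ⟨Kfun C M, Kfun_pos hC M, ?_⟩
  intro ω a b ha hb μ ε hμ hε hε1 hab hbb hh hda hdb
  have hμ0 : (0:ℝ) < μ := lt_trans one_pos hμ
  -- key claim with constant Kfun C m
  have key : ∀ m, m ≤ M → ∀ x ∈ closure ω,
      ‖iteratedFDeriv ℝ m (fun y => a y - b y) x‖ ≤ Kfun C m * μ ^ m * ε := by
    intro m
    induction m using Nat.strong_induction_on with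
    | _ m ih =>
      intro hmM x hx
      -- ContDiff facts at level m
      have hmM' : (m : WithTop ℕ∞) ≤ (M : ℕ) := by exact_mod_cast hmM
      have haM : ContDiff ℝ m a := ha.of_le hmM'
      have hbM : ContDiff ℝ m b := hb.of_le hmM'
      have hfM : ContDiff ℝ m (fun y => a y - b y) := haM.sub hbM
      match m, hmM, ih, haM, hbM, hfM with
      | 0, hmM, ih, haM, hbM, hfM =>
        -- base case
        have h0 := hh 0 (Nat.zero_le _) x hx
        rw [norm_iteratedFDeriv_zero] at h0 ⊢
        have hax := hab x hx
        have hbx := hbb x hx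
        have habs : |a x - b x| ≤ |(a x)^2 - (b x)^2| := by
          have : (a x)^2 - (b x)^2 = (a x - b x) * (a x + b x) := by ring
          rw [this, abs_mul]
          nlinarith [abs_nonneg (a x - b x), le_abs_self (a x + b x),
            abs_nonneg ((a x - b x) * (a x + b x))]
        simp only [Real.norm_eq_abs] at h0 ⊢
        calc |a x - b x| ≤ |(a x)^2 - (b x)^2| := habs
          _ ≤ C * μ ^ 0 * ε := h0
          _ = Kfun C 0 * μ ^ 0 * ε := by simp [Kfun]
      | n + 1, hmM, ih, haM, hbM, hfM =>
        set f : (Fin 2 → ℝ) → ℝ := fun y => a y - b y with hfdef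
        set c : ℝ := a x + b x with hcdef
        have hax := hab x hx
        have hbx := hbb x hx
        have hc1 : (1:ℝ) ≤ c := by simp only [hcdef]; linarith [hax.1, hbx.1]
        -- the auxiliary function
        set G : (Fin 2 → ℝ) → ℝ := fun y => (a y + b y) - c with hGdef
        have hGc : ContDiff ℝ (n+1 : ℕ) G := (haM.add hbM).sub contDiff_const
        have hfG : ContDiff ℝ (n+1 : ℕ) (fun y => f y * G y) := hfM.mul hGc
        have hhc : ContDiff ℝ (n+1 : ℕ) (fun y => (a y)^2 - (b y)^2) :=
          (haM.pow 2).sub (hbM.pow 2)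
        -- identity : c • f = h - f*G
        have hid : iteratedFDeriv ℝ (n+1) (fun y => c * f y) x =
            iteratedFDeriv ℝ (n+1) (fun y => (a y)^2 - (b y)^2) x -
            iteratedFDeriv ℝ (n+1) (fun y => f y * G y) x := by
          rw [← iteratedFDeriv_sub_apply'' hhc hfG]
          congr 1
          funext y
          simp only [hfdef, hGdef]
          ring
        -- left side equals c • D f
        have hsmul : iteratedFDeriv ℝ (n+1) (fun y => c * f y) x =
            c • iteratedFDeriv ℝ (n+1) f x := by
          have := iteratedFDeriv_const_smul_apply (𝕜 := ℝ) (f := f) (a := c)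
            (x := x) (i := n+1) hfM.contDiffAt
          exact this
        -- bound on the product term
        have hprod : ‖iteratedFDeriv ℝ (n+1) (fun y => f y * G y) x‖ ≤
            ∑ i ∈ Finset.range (n+2), ((n+1).choose i : ℝ) *
              ‖iteratedFDeriv ℝ i f x‖ * ‖iteratedFDeriv ℝ (n+1-i) G x‖ :=
          norm_iteratedFDeriv_mul_le (𝕜 := ℝ) hfM hGc x le_rfl
        -- bound each term of the sum
        have hterm : ∀ i ∈ Finset.range (n+2),
            ((n+1).choose i : ℝ) * ‖iteratedFDeriv ℝ i f x‖ *
              ‖iteratedFDeriv ℝ (n+1-i) G x‖ ≤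
            ((n+1).choose i : ℝ) * (Kfun C n * (2 * C)) * μ ^ (n+1) * ε := by
          intro i hi
          rw [Finset.mem_range] at hi
          rcases Nat.lt_or_ge i (n+1) with hin | hin
          · -- i ≤ n : use ih and derivative bound on G
            have hif : ‖iteratedFDeriv ℝ i f x‖ ≤ Kfun C i * μ ^ i * ε :=
              ih i hin (by omega) x hx
            have hKi : Kfun C i ≤ Kfun C n := Kfun_mono hC (Nat.lt_succ_iff.mp hin)
            have hj : 1 ≤ n + 1 - i := by omega
            have hjne : n + 1 - i ≠ 0 := by omega
            have hGD : iteratedFDeriv ℝ (n+1-i) G x =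
                iteratedFDeriv ℝ (n+1-i) (fun y => a y + b y) x := by
              have hcd : ContDiff ℝ (n+1-i : ℕ) (fun y => a y + b y) := by
                refine ContDiff.add (haM.of_le ?_) (hbM.of_le ?_) <;>
                  exact_mod_cast Nat.sub_le (n+1) i
              rw [hGdef]
              rw [iteratedFDeriv_sub_apply'' hcd contDiff_const,
                iteratedFDeriv_const_of_ne hjne]
              simp
            have hGb : ‖iteratedFDeriv ℝ (n+1-i) G x‖ ≤ 2 * C * μ ^ (n+1-i) := by
              rw [hGD]
              have hj2 : n + 1 - i ≤ M := le_trans (Nat.sub_le _ _) hmM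
              have hadd : iteratedFDeriv ℝ (n+1-i) (fun y => a y + b y) x =
                  iteratedFDeriv ℝ (n+1-i) a x + iteratedFDeriv ℝ (n+1-i) b x := by
                refine iteratedFDeriv_add_apply' (haM.of_le ?_).contDiffAt (hbM.of_le ?_).contDiffAt <;>
                  exact_mod_cast Nat.sub_le (n+1) i
              rw [hadd]
              calc ‖iteratedFDeriv ℝ (n+1-i) a x + iteratedFDeriv ℝ (n+1-i) b x‖
                  ≤ ‖iteratedFDeriv ℝ (n+1-i) a x‖ + ‖iteratedFDeriv ℝ (n+1-i) b x‖ :=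
                    norm_add_le _ _
                _ ≤ C * μ ^ (n+1-i) + C * μ ^ (n+1-i) :=
                    add_le_add (hda _ hj2 x hx) (hdb _ hj2 x hx)
                _ = 2 * C * μ ^ (n+1-i) := by ring
            have hnn : (0:ℝ) ≤ ((n+1).choose i : ℝ) := Nat.cast_nonneg _
            have hμpow : μ ^ i * μ ^ (n+1-i) = μ ^ (n+1) := by
              rw [← pow_add]; congr 1; omega
            have h1 : ‖iteratedFDeriv ℝ i f x‖ * ‖iteratedFDeriv ℝ (n+1-i) G x‖ ≤
                (Kfun C i * μ ^ i * ε) * (2 * C * μ ^ (n+1-i)) := by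
              have hKip := Kfun_pos hC i
              apply mul_le_mul hif hGb (norm_nonneg _)
              positivity
            calc ((n+1).choose i : ℝ) * ‖iteratedFDeriv ℝ i f x‖ *
                  ‖iteratedFDeriv ℝ (n+1-i) G x‖
                = ((n+1).choose i : ℝ) * (‖iteratedFDeriv ℝ i f x‖ *
                  ‖iteratedFDeriv ℝ (n+1-i) G x‖) := by ring
              _ ≤ ((n+1).choose i : ℝ) * ((Kfun C i * μ ^ i * ε) * (2 * C * μ ^ (n+1-i))) :=
                  mul_le_mul_of_nonneg_left h1 hnn
              _ = ((n+1).choose i : ℝ) * (Kfun C i * (2*C)) * (μ ^ i * μ ^ (n+1-i)) * ε := by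
                  ring
              _ = ((n+1).choose i : ℝ) * (Kfun C i * (2*C)) * μ ^ (n+1) * ε := by
                  rw [hμpow]
              _ ≤ ((n+1).choose i : ℝ) * (Kfun C n * (2*C)) * μ ^ (n+1) * ε := by
                  have : (0:ℝ) ≤ μ ^ (n+1) := by positivity
                  apply mul_le_mul_of_nonneg_right
                  apply mul_le_mul_of_nonneg_right _ this
                  apply mul_le_mul_of_nonneg_left _ hnn
                  exact mul_le_mul_of_nonneg_right hKi (by linarith)
                  exact le_of_lt hε
          · -- i = n+1 : G term vanishes
            have hieq : i = n + 1 := by omega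
            subst hieq
            have hG0 : ‖iteratedFDeriv ℝ (n+1-(n+1)) G x‖ = 0 := by
              rw [Nat.sub_self, norm_iteratedFDeriv_zero]
              simp [hGdef, hcdef]
            rw [hG0, mul_zero]
            have hKp := Kfun_pos hC n
            positivity
        -- sum bound
        have hsum : ‖iteratedFDeriv ℝ (n+1) (fun y => f y * G y) x‖ ≤
            2 * C * 2 ^ (n+1) * Kfun C n * μ ^ (n+1) * ε := by
          refine le_trans hprod (le_trans (Finset.sum_le_sum hterm) ?_)
          rw [← Finset.sum_mul, ← Finset.sum_mul, ← Finset.sum_mul]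
          have hchoose : ∑ i ∈ Finset.range (n+2), ((n+1).choose i : ℝ) = 2 ^ (n+1) := by
            rw [← Nat.cast_sum]
            norm_cast
            exact Nat.sum_range_choose (n+1)
          rw [hchoose]
          apply le_of_eq; ring
        -- main chain
        have hKpos := Kfun_pos hC n
        have hcnorm : ‖iteratedFDeriv ℝ (n+1) f x‖ ≤ c * ‖iteratedFDeriv ℝ (n+1) f x‖ :=
          le_mul_of_one_le_left (norm_nonneg _) hc1
        have hcsmul : c * ‖iteratedFDeriv ℝ (n+1) f x‖ =
            ‖iteratedFDeriv ℝ (n+1) (fun y => c * f y) x‖ := by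
          rw [hsmul, norm_smul c (iteratedFDeriv ℝ (n+1) f x), Real.norm_eq_abs,
            abs_of_nonneg (show (0:ℝ) ≤ c by linarith)]
        have hfinal : ‖iteratedFDeriv ℝ (n+1) (fun y => c * f y) x‖ ≤
            (C + 2 * C * 2 ^ (n+1) * Kfun C n) * μ ^ (n+1) * ε := by
          rw [hid]
          calc ‖iteratedFDeriv ℝ (n+1) (fun y => (a y)^2 - (b y)^2) x -
                iteratedFDeriv ℝ (n+1) (fun y => f y * G y) x‖
              ≤ ‖iteratedFDeriv ℝ (n+1) (fun y => (a y)^2 - (b y)^2) x‖ +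
                ‖iteratedFDeriv ℝ (n+1) (fun y => f y * G y) x‖ := norm_sub_le _ _
            _ ≤ C * μ ^ (n+1) * ε + 2 * C * 2 ^ (n+1) * Kfun C n * μ ^ (n+1) * ε :=
                add_le_add (hh (n+1) hmM x hx) hsum
            _ = (C + 2 * C * 2 ^ (n+1) * Kfun C n) * μ ^ (n+1) * ε := by ring
        calc ‖iteratedFDeriv ℝ (n+1) f x‖
            ≤ c * ‖iteratedFDeriv ℝ (n+1) f x‖ := hcnorm
          _ = ‖iteratedFDeriv ℝ (n+1) (fun y => c * f y) x‖ := hcsmul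
          _ ≤ (C + 2 * C * 2 ^ (n+1) * Kfun C n) * μ ^ (n+1) * ε := hfinal
          _ ≤ Kfun C (n+1) * μ ^ (n+1) * ε := by
              have hμp : (0:ℝ) < μ ^ (n+1) := pow_pos hμ0 _
              have hbase : C + 2 * C * 2 ^ (n+1) * Kfun C n ≤ Kfun C (n+1) := by
                simp only [Kfun]; linarith [Kfun_pos hC n]
              exact mul_le_mul_of_nonneg_right
                (mul_le_mul_of_nonneg_right hbase (le_of_lt hμp)) (le_of_lt hε)
  intro m hm x hx
  have hK : Kfun C m ≤ Kfun C M := Kfun_mono hC hm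
  have hμp : (0:ℝ) ≤ μ ^ m := le_of_lt (pow_pos hμ0 _)
  exact le_trans (key m hm x hx)
    (mul_le_mul_of_nonneg_right (mul_le_mul_of_nonneg_right hK hμp) (le_of_lt hε))
end
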